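/- arXiv:2103.06588 — 5 statements merged into one kernel-verified Lean document; each statement's English description precedes it below -/
import Mathlib

section
/- The matrix of τ_d applied to the upper-triangular unipotent element [[1,a],[0,1]] in the standard basis is the d×d upper triangular matrix whose (k,j) entry equals binom(j−1, k−1) a^{j−k} for 1 ≤ k ≤ j ≤ d, and 0 for k > j. Moreover, when a > 0, this matrix is totally positive with respect to the standard basis: every minor of this upper triangular matrix that is not forced to vanish by upper-triangularity is strictly positive. -/
/-- The standard irreducible `d`-dimensional representation `τ_d` of `2 × 2` real matrices,
given by the induced action on `Sym^{d-1}(ℝ²)`: the basis vector of index `i` (0-based)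
corresponds to the monomial `e₁^{d-1-i} e₂^{i}`, and the `(i,j)` entry of `τ_d g` is the
coefficient of `e₁^{d-1-i} e₂^{i}` in `(g·e₁)^{d-1-j} (g·e₂)^{j}`,
where `g·e₁ = g₀₀ e₁ + g₁₀ e₂` and `g·e₂ = g₀₁ e₁ + g₁₁ e₂`. -/
def tauRep (d : ℕ) (g : Matrix (Fin 2) (Fin 2) ℝ) : Matrix (Fin d) (Fin d) ℝ :=
  Matrix.of fun i j : Fin d =>
    ∑ l ∈ Finset.range d,
      if l ≤ d - 1 - (i : ℕ) then
        ((d - 1 - (j : ℕ)).choose l : ℝ) * g 0 0 ^ l * g 1 0 ^ (d - 1 - (j : ℕ) - l) *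
          ((j : ℕ).choose (d - 1 - (i : ℕ) - l) : ℝ) * g 0 1 ^ (d - 1 - (i : ℕ) - l) *
          g 1 1 ^ ((j : ℕ) - (d - 1 - (i : ℕ) - l))
      else 0

/-- A matrix is (unipotent) totally positive with respect to the standard basis if it is
upper triangular and every minor not forced to vanish by upper-triangularity (i.e. every
minor with strictly increasing row indices `I` and column indices `J` satisfying
`I l ≤ J l` for all `l`) is strictly positive. -/
def IsTotallyPositiveUpper {d : ℕ} (M : Matrix (Fin d) (Fin d) ℝ) : Prop :=
  (∀ i j : Fin d, j < i → M i j = 0) ∧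
  ∀ (k : ℕ) (I J : Fin k → Fin d), StrictMono I → StrictMono J → (∀ l, I l ≤ J l) →
    0 < (M.submatrix I J).det

namespace TPAux

open Matrix

variable {d k : ℕ}

def Pmat (a : ℝ) (d : ℕ) : Matrix (Fin d) (Fin d) ℝ :=
  Matrix.of fun i j : Fin d =>
    if (i : ℕ) ≤ (j : ℕ) then ((j : ℕ).choose (i : ℕ) : ℝ) * a ^ ((j : ℕ) - (i : ℕ)) else 0

def Emat (a : ℝ) (d s : ℕ) : Matrix (Fin d) (Fin d) ℝ :=
  Matrix.of fun i j : Fin d =>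
    if j = i then 1 else if (j : ℕ) = (i : ℕ) + 1 ∧ (i : ℕ) = s then a else 0

def Tmat (a : ℝ) (d σ : ℕ) : Matrix (Fin d) (Fin d) ℝ :=
  Matrix.of fun i j : Fin d =>
    if j = i then 1 else if (j : ℕ) = (i : ℕ) + 1 ∧ σ ≤ (i : ℕ) then a else 0

lemma mul_Emat_apply (a : ℝ) (s : ℕ) (A : Matrix (Fin d) (Fin d) ℝ) (i j : Fin d) :
    (A * Emat a d s) i j
      = A i j + (if h : (j : ℕ) = s + 1 then a * A i ⟨s, by omega⟩ else 0) := by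
  rw [Matrix.mul_apply]
  have key : ∀ x : Fin d, A i x * Emat a d s x j
      = (if j = x then A i x else 0)
        + (if ((j : ℕ) = s + 1 ∧ (x : ℕ) = s) then a * A i x else 0) := by
    intro x
    simp only [Emat, Matrix.of_apply]
    by_cases h1 : j = x
    · subst h1
      have h2 : ¬ ((j : ℕ) = s + 1 ∧ (j : ℕ) = s) := by omega
      simp [h2]
    · have h3 : (j = x) = False := by simp [h1]
      have h4 : ((j:ℕ) = (x:ℕ) + 1 ∧ (x:ℕ) = s) ↔ ((j:ℕ) = s + 1 ∧ (x:ℕ) = s) := by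
        constructor <;> (rintro ⟨p, q⟩; omega)
      simp only [if_neg h1]
      by_cases h5 : (j:ℕ) = s + 1 ∧ (x:ℕ) = s
      · rw [if_pos (h4.mpr h5), if_pos h5, mul_comm (A i x) a, zero_add]
      · rw [if_neg (fun hc => h5 (h4.mp hc)), if_neg h5, mul_zero, zero_add]
  rw [Finset.sum_congr rfl (fun x _ => key x), Finset.sum_add_distrib]
  congr 1
  · simp
  · by_cases h : (j : ℕ) = s + 1
    · have hs : s < d := by have := j.isLt; omega
      rw [dif_pos h]
      have : ∀ x : Fin d, ((j : ℕ) = s + 1 ∧ (x : ℕ) = s) ↔ x = (⟨s, hs⟩ : Fin d) := by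
        intro x; simp [Fin.ext_iff, h]
      rw [Finset.sum_congr rfl (fun x _ => by rw [if_congr (this x) rfl rfl])]
      simp
    · rw [dif_neg h]
      apply Finset.sum_eq_zero
      intro x _
      rw [if_neg (fun hc => h hc.1)]


/-- zero minor lemma: upper triangular, some row index exceeds col index -/
lemma det_submatrix_eq_zero (A : Matrix (Fin d) (Fin d) ℝ)
    (hA : ∀ i j : Fin d, j < i → A i j = 0)
    {I J : Fin k → Fin d} (hI : Monotone I) (hJ : Monotone J)
    {m₀ : Fin k} (hm : J m₀ < I m₀) :
    (A.submatrix I J).det = 0 := by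
  rw [Matrix.det_apply]
  apply Finset.sum_eq_zero
  intro σ _
  have : ∃ i : Fin k, i ≤ m₀ ∧ m₀ ≤ σ i := by
    by_contra hc
    push_neg at hc
    have hmap : ∀ i ∈ Finset.Iic m₀, σ i ∈ Finset.Iio m₀ := by
      intro i hi
      simp only [Finset.mem_Iic] at hi
      simp only [Finset.mem_Iio]
      exact hc i hi
    have hinj : Set.InjOn σ (Finset.Iic m₀) := fun x _ y _ h => σ.injective h
    have := Finset.card_le_card_of_injOn σ hmap hinj
    rw [Fin.card_Iic, Fin.card_Iio] at this
    omega
  obtain ⟨i, hi1, hi2⟩ := this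
  have hz : (A.submatrix I J) (σ i) i = 0 := by
    apply hA
    exact lt_of_le_of_lt (hJ hi1) (lt_of_lt_of_le hm (hI hi2))
  have hp : ∏ j : Fin k, A.submatrix I J (σ j) j = 0 :=
    Finset.prod_eq_zero (Finset.mem_univ i) hz
  rw [hp, smul_zero]

/-- unit minor lemma -/
lemma det_submatrix_self (A : Matrix (Fin d) (Fin d) ℝ)
    (hA : ∀ i j : Fin d, j < i → A i j = 0) (hdiag : ∀ i, A i i = 1)
    {I : Fin k → Fin d} (hI : StrictMono I) :
    (A.submatrix I I).det = 1 := by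
  rw [Matrix.det_of_upperTriangular]
  · simp [hdiag]
  · intro i j hji
    exact hA _ _ (hI hji)

lemma det_submatrix_mul_Emat (a : ℝ) (s : ℕ) (A : Matrix (Fin d) (Fin d) ℝ)
    (I J : Fin k → Fin d) (hJ : Function.Injective J)
    (m₀ : Fin k) (hm : (J m₀ : ℕ) = s + 1) :
    ((A * Emat a d s).submatrix I J).det
      = (A.submatrix I J).det
        + a * (A.submatrix I (Function.update J m₀ ⟨s, by have := (J m₀).isLt; omega⟩)).det := by
  have hs : s < d := by have := (J m₀).isLt; omega
  have key : (A * Emat a d s).submatrix I J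
      = (A.submatrix I J).updateCol m₀
          ((fun l => A (I l) (J m₀)) + fun l => a * A (I l) ⟨s, hs⟩) := by
    ext l m
    rw [Matrix.submatrix_apply, mul_Emat_apply, Matrix.updateCol_apply]
    by_cases hmm : m = m₀
    · subst hmm
      rw [dif_pos hm, if_pos rfl]
      simp [Matrix.submatrix_apply]
    · have hne : (J m : ℕ) ≠ s + 1 := by
        intro hc
        exact hmm (hJ (Fin.ext (by omega : (J m : ℕ) = (J m₀ : ℕ))))
      rw [dif_neg hne, if_neg hmm, add_zero]
      rfl
  rw [key, Matrix.det_updateCol_add]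
  congr 1
  · have : (fun l => A (I l) (J m₀)) = fun l => (A.submatrix I J) l m₀ := rfl
    rw [this, Matrix.updateCol_eq_self]
  · have h1 : (fun l => a * A (I l) (⟨s, hs⟩ : Fin d)) = a • (fun l => A (I l) ⟨s, hs⟩) := rfl
    rw [h1, Matrix.det_updateCol_smul]
    congr 2
    ext l m
    by_cases hmm : m = m₀
    · subst hmm
      simp [Matrix.updateCol_apply, Function.update_self]
    · simp [Matrix.updateCol_apply, hmm, Function.update_of_ne hmm]



structure Good (A : Matrix (Fin d) (Fin d) ℝ) : Prop where
  upper : ∀ i j : Fin d, j < i → A i j = 0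
  diag : ∀ i, A i i = 1
  nonneg : ∀ (k : ℕ) (I J : Fin k → Fin d), StrictMono I → StrictMono J →
    (∀ m, I m ≤ J m) → 0 ≤ (A.submatrix I J).det

lemma good_one : Good (1 : Matrix (Fin d) (Fin d) ℝ) := by
  refine ⟨?_, ?_, ?_⟩
  · intro i j hji
    exact Matrix.one_apply_ne (fun h => absurd h.symm (ne_of_lt hji))
  · intro i; exact Matrix.one_apply_eq i
  · intro k I J hI hJ hIJ
    by_cases h : ∀ m, I m = J m
    · have hJI : J = I := funext fun m => (h m).symm
      subst hJI
      rw [det_submatrix_self _ (fun i j hji => Matrix.one_apply_ne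
        (fun h => absurd h.symm (ne_of_lt hji))) (fun i => Matrix.one_apply_eq i) hI]
      norm_num
    · push_neg at h
      obtain ⟨m₀, hm₀⟩ := h
      have hlt : I m₀ < J m₀ := lt_of_le_of_ne (hIJ m₀) hm₀
      have : ((1 : Matrix (Fin d) (Fin d) ℝ).submatrix I J).det
          = ((1 : Matrix (Fin d) (Fin d) ℝ)ᵀ.submatrix J I).det := by
        rw [← Matrix.transpose_submatrix, Matrix.det_transpose]
      rw [this, Matrix.transpose_one]
      rw [det_submatrix_eq_zero _ (fun i j hji => Matrix.one_apply_ne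
        (fun h => absurd h.symm (ne_of_lt hji))) hJ.monotone hI.monotone hlt]

/-- nonnegativity of the auxiliary determinant appearing in the column-operation formula -/
lemma det_update_nonneg {s : ℕ} {A : Matrix (Fin d) (Fin d) ℝ} (hA : Good A)
    {I J : Fin k → Fin d} (hI : StrictMono I) (hJ : StrictMono J)
    (hIJ : ∀ m, I m ≤ J m) (m₀ : Fin k) (hm : (J m₀ : ℕ) = s + 1) (hs : s < d) :
    0 ≤ (A.submatrix I (Function.update J m₀ ⟨s, hs⟩)).det := by
  set J' := Function.update J m₀ (⟨s, hs⟩ : Fin d) with hJ'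
  by_cases hex : ∃ m₁, (J m₁ : ℕ) = s
  · obtain ⟨m₁, hm₁⟩ := hex
    have hne : m₁ ≠ m₀ := by intro h; rw [h, hm] at hm₁; omega
    have hcol : ∀ l, (A.submatrix I J') l m₁ = (A.submatrix I J') l m₀ := by
      intro l
      simp only [Matrix.submatrix_apply, hJ', Function.update_of_ne hne,
        Function.update_self]
      congr 1
      exact Fin.ext hm₁
    rw [Matrix.det_zero_of_column_eq hne hcol]
  · push_neg at hex
    have hval : ∀ m, (J' m : ℕ) = if m = m₀ then s else (J m : ℕ) := by
      intro m
      by_cases h : m = m₀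
      · subst h; simp [hJ', Function.update_self]
      · simp [hJ', Function.update_of_ne h, h]
    have hJ'm : StrictMono J' := by
      intro m m' hmm
      rw [Fin.lt_def, hval m, hval m']
      have h1 : (J m : ℕ) < (J m' : ℕ) := hJ hmm
      by_cases e1 : m = m₀
      · rw [if_pos e1]
        by_cases e2 : m' = m₀
        · exact absurd (e1.trans e2.symm) (ne_of_lt hmm)
        · rw [if_neg e2]
          have h2 : (J m : ℕ) = s + 1 := by rw [e1]; exact hm
          omega
      · rw [if_neg e1]
        by_cases e2 : m' = m₀
        · rw [if_pos e2]
          have h3 : (J m' : ℕ) = s + 1 := by rw [e2]; exact hm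
          have h4 : (J m : ℕ) ≠ s := hex m
          omega
        · rw [if_neg e2]; exact h1
    by_cases hadm : ∀ m, I m ≤ J' m
    · exact hA.nonneg k I J' hI hJ'm hadm
    · push_neg at hadm
      obtain ⟨m₂, hm₂⟩ := hadm
      rw [det_submatrix_eq_zero A hA.upper hI.monotone hJ'm.monotone hm₂]

lemma le_det_mul_Emat {a : ℝ} {s : ℕ} {A : Matrix (Fin d) (Fin d) ℝ} (hA : Good A)
    (ha : 0 ≤ a) {I J : Fin k → Fin d} (hI : StrictMono I) (hJ : StrictMono J)
    (hIJ : ∀ m, I m ≤ J m) :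
    (A.submatrix I J).det ≤ ((A * Emat a d s).submatrix I J).det := by
  by_cases hex : ∃ m₀, (J m₀ : ℕ) = s + 1
  · obtain ⟨m₀, hm⟩ := hex
    have hs : s < d := by have := (J m₀).isLt; omega
    rw [det_submatrix_mul_Emat a s A I J hJ.injective m₀ hm]
    have h2 := det_update_nonneg hA hI hJ hIJ m₀ hm hs
    nlinarith
  · push_neg at hex
    have : (A * Emat a d s).submatrix I J = A.submatrix I J := by
      ext l m
      simp only [Matrix.submatrix_apply, mul_Emat_apply, dif_neg (hex m), add_zero]
    rw [this]

lemma a_mul_det_le_det_mul_Emat {a : ℝ} {s : ℕ} {A : Matrix (Fin d) (Fin d) ℝ} (hA : Good A)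
    (ha : 0 ≤ a) {I J : Fin k → Fin d} (hI : StrictMono I) (hJ : StrictMono J)
    (hIJ : ∀ m, I m ≤ J m) (m₀ : Fin k) (hm : (J m₀ : ℕ) = s + 1) (hs : s < d) :
    a * (A.submatrix I (Function.update J m₀ ⟨s, hs⟩)).det
      ≤ ((A * Emat a d s).submatrix I J).det := by
  rw [det_submatrix_mul_Emat a s A I J hJ.injective m₀ hm]
  have h1 := hA.nonneg k I J hI hJ hIJ
  have : (A.submatrix I (Function.update J m₀ ⟨s, by have := (J m₀).isLt; omega⟩)).det
      = (A.submatrix I (Function.update J m₀ ⟨s, hs⟩)).det := rfl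
  linarith [this]

lemma good_mul_Emat {a : ℝ} {s : ℕ} {A : Matrix (Fin d) (Fin d) ℝ} (hA : Good A)
    (ha : 0 ≤ a) : Good (A * Emat a d s) := by
  refine ⟨?_, ?_, ?_⟩
  · intro i j hji
    rw [mul_Emat_apply, hA.upper i j hji]
    by_cases h : (j : ℕ) = s + 1
    · rw [dif_pos h, hA.upper i ⟨s, by omega⟩ (by
        have : (j:ℕ) < (i:ℕ) := hji
        exact Fin.lt_def.mpr (by simp; omega)), mul_zero, add_zero]
    · rw [dif_neg h, add_zero]
  · intro i
    rw [mul_Emat_apply, hA.diag i]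
    by_cases h : (i : ℕ) = s + 1
    · rw [dif_pos h, hA.upper i ⟨s, by omega⟩ (Fin.lt_def.mpr (by simp; omega)),
        mul_zero, add_zero]
    · rw [dif_neg h, add_zero]
  · intro k I J hI hJ hIJ
    exact le_trans (hA.nonneg k I J hI hJ hIJ) (le_det_mul_Emat hA ha hI hJ hIJ)

def runAux (a : ℝ) (d : ℕ) : ℕ → Matrix (Fin d) (Fin d) ℝ
  | 0 => 1
  | t + 1 => runAux a d t * Emat a d (d - 2 - t)

lemma good_mul_runAux {a : ℝ} {A : Matrix (Fin d) (Fin d) ℝ} (hA : Good A) (ha : 0 ≤ a) :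
    ∀ t, Good (A * runAux a d t) := by
  intro t
  induction t with
  | zero => simpa [runAux] using hA
  | succ t ih =>
      have : A * runAux a d (t + 1) = (A * runAux a d t) * Emat a d (d - 2 - t) := by
        rw [runAux, Matrix.mul_assoc]
      rw [this]
      exact good_mul_Emat ih ha

lemma run_lemma {a : ℝ} (ha : 0 < a) {A : Matrix (Fin d) (Fin d) ℝ} (hA : Good A) :
    ∀ (t : ℕ), t ≤ d - 1 → ∀ (I C C' : Fin k → Fin d), StrictMono I → StrictMono C →
      StrictMono C' → (∀ m, I m ≤ C m) →
      (∀ m, (C' m : ℕ) = (C m : ℕ) ∨ ((C' m : ℕ) = (C m : ℕ) + 1 ∧ d - 1 - t ≤ (C m : ℕ))) →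
      a ^ (∑ m, ((C' m : ℕ) - (C m : ℕ))) * (A.submatrix I C).det
        ≤ ((A * runAux a d t).submatrix I C').det := by
  intro t
  induction t with
  | zero =>
      intro _ I C C' hI hC hC' hIC hcond
      have hCC : C' = C := by
        funext m
        rcases hcond m with h | ⟨h, hge⟩
        · exact Fin.ext h
        · exfalso; have := (C' m).isLt; have := (C m).isLt; omega
      subst hCC
      have hsum : (∑ m, ((C' m : ℕ) - (C' m : ℕ))) = 0 := by simp
      rw [hsum, pow_zero, one_mul]
      have : A * runAux a d 0 = A := by simp [runAux]
      rw [this]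
  | succ t ih =>
      intro ht I C C' hI hC hC' hIC hcond
      set s := d - 2 - t with hsdef
      have hs1 : d - 1 - (t + 1) = s := by omega
      have hs2 : d - 1 - t = s + 1 := by omega
      rw [hs1] at hcond
      have hA' : Good (A * runAux a d t) := good_mul_runAux hA ha.le t
      have hmulassoc : A * runAux a d (t + 1) = (A * runAux a d t) * Emat a d s := by
        rw [runAux, Matrix.mul_assoc]
      have hIC' : ∀ m, I m ≤ C' m := by
        intro m
        refine le_trans (hIC m) (Fin.le_def.mpr ?_)
        rcases hcond m with h | ⟨h, _⟩ <;> omega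
      by_cases hx : ∃ m₀, (C' m₀ : ℕ) = (C m₀ : ℕ) + 1 ∧ (C m₀ : ℕ) = s
      · obtain ⟨m₀, hm1, hm2⟩ := hx
        have hsd : s < d := by have := (C m₀).isLt; omega
        have hC'm₀ : (C' m₀ : ℕ) = s + 1 := by omega
        have hnotin : ∀ m, (C' m : ℕ) ≠ s := by
          intro m hcs
          rcases hcond m with h | ⟨h, hge⟩
          · have he : C m = C m₀ := Fin.ext (by omega)
            have : m = m₀ := hC.injective he
            subst this
            omega
          · omega
        set C'' := Function.update C' m₀ (C m₀) with hC''def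
        have hval : ∀ m, (C'' m : ℕ) = if m = m₀ then (C m₀ : ℕ) else (C' m : ℕ) := by
          intro m
          by_cases h : m = m₀
          · subst h; simp [hC''def, Function.update_self]
          · simp [hC''def, Function.update_of_ne h, h]
        have hC''m : StrictMono C'' := by
          intro m m' hmm
          rw [Fin.lt_def, hval m, hval m']
          have h1 : (C' m : ℕ) < (C' m' : ℕ) := hC' hmm
          by_cases e1 : m = m₀
          · rw [if_pos e1]
            by_cases e2 : m' = m₀
            · exact absurd (e1.trans e2.symm) (ne_of_lt hmm)
            · rw [if_neg e2]
              have : (C' m : ℕ) = s + 1 := by rw [e1]; exact hC'm₀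
              omega
          · rw [if_neg e1]
            by_cases e2 : m' = m₀
            · rw [if_pos e2]
              have h3 : (C' m' : ℕ) = s + 1 := by rw [e2]; exact hC'm₀
              have h4 : (C' m : ℕ) ≠ s := hnotin m
              omega
            · rw [if_neg e2]; exact h1
        have hcond'' : ∀ m, (C'' m : ℕ) = (C m : ℕ) ∨
            ((C'' m : ℕ) = (C m : ℕ) + 1 ∧ d - 1 - t ≤ (C m : ℕ)) := by
          intro m
          rw [hval m]
          by_cases h : m = m₀
          · rw [if_pos h, h]; left; rfl
          · rw [if_neg h]
            rcases hcond m with h1 | ⟨h1, hge⟩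
            · left; exact h1
            · right
              refine ⟨h1, ?_⟩
              rw [hs2]
              have : (C m : ℕ) ≠ s := by
                intro hcs
                exact h (hC.injective (Fin.ext (hcs.trans hm2.symm)))
              omega
        have hIC'' : ∀ m, I m ≤ C'' m := by
          intro m
          refine le_trans (hIC m) (Fin.le_def.mpr ?_)
          rw [hval m]
          by_cases h : m = m₀
          · rw [if_pos h, h]
          · rw [if_neg h]
            rcases hcond m with h1 | ⟨h1, _⟩ <;> omega
        have hsum : (∑ m, ((C' m : ℕ) - (C m : ℕ)))
            = (∑ m, ((C'' m : ℕ) - (C m : ℕ))) + 1 := by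
          rw [← Finset.sum_erase_add _ _ (Finset.mem_univ m₀),
            ← Finset.sum_erase_add _ _ (Finset.mem_univ m₀)]
          have he : ∀ m ∈ Finset.univ.erase m₀,
              (C' m : ℕ) - (C m : ℕ) = (C'' m : ℕ) - (C m : ℕ) := by
            intro m hm
            rw [hval m, if_neg (Finset.ne_of_mem_erase hm)]
          rw [Finset.sum_congr rfl he]
          have h1 : (C' m₀ : ℕ) - (C m₀ : ℕ) = 1 := by omega
          have h2 : (C'' m₀ : ℕ) - (C m₀ : ℕ) = 0 := by rw [hval m₀, if_pos rfl]; omega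
          omega
        have hIH := ih (by omega) I C C'' hI hC hC''m hIC hcond''
        have hupd : Function.update C' m₀ (⟨s, hsd⟩ : Fin d) = C'' := by
          have hf : (⟨s, hsd⟩ : Fin d) = C m₀ := Fin.ext hm2.symm
          rw [hC''def, hf]
        have hstep := a_mul_det_le_det_mul_Emat hA' ha.le hI hC' hIC' m₀ hC'm₀ hsd
        rw [hupd] at hstep
        rw [hmulassoc, hsum]
        calc a ^ ((∑ m, ((C'' m : ℕ) - (C m : ℕ))) + 1) * (A.submatrix I C).det
            = a * (a ^ (∑ m, ((C'' m : ℕ) - (C m : ℕ))) * (A.submatrix I C).det) := by ring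
          _ ≤ a * (((A * runAux a d t).submatrix I C'').det) :=
              mul_le_mul_of_nonneg_left hIH ha.le
          _ ≤ (((A * runAux a d t) * Emat a d s).submatrix I C').det := hstep
      · push_neg at hx
        have hcond' : ∀ m, (C' m : ℕ) = (C m : ℕ) ∨
            ((C' m : ℕ) = (C m : ℕ) + 1 ∧ d - 1 - t ≤ (C m : ℕ)) := by
          intro m
          rcases hcond m with h1 | ⟨h1, hge⟩
          · left; exact h1
          · right
            refine ⟨h1, ?_⟩
            rw [hs2]
            have := hx m h1
            omega
        have hIH := ih (by omega) I C C' hI hC hC' hIC hcond'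
        have hmono := le_det_mul_Emat (s := s) hA' ha.le hI hC' hIC'
        rw [hmulassoc]
        exact le_trans hIH hmono

lemma Tmat_mul_apply (a : ℝ) (σ : ℕ) (X : Matrix (Fin d) (Fin d) ℝ) (i j : Fin d) :
    (Tmat a d σ * X) i j
      = X i j + (if h : σ ≤ (i : ℕ) ∧ (i : ℕ) + 1 < d then a * X ⟨(i : ℕ) + 1, h.2⟩ j else 0) := by
  rw [Matrix.mul_apply]
  have key : ∀ x : Fin d, Tmat a d σ i x * X x j
      = (if x = i then X x j else 0)
        + (if ((x : ℕ) = (i : ℕ) + 1 ∧ σ ≤ (i : ℕ)) then a * X x j else 0) := by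
    intro x
    simp only [Tmat, Matrix.of_apply]
    by_cases h1 : x = i
    · subst h1
      have h2 : ¬ ((x : ℕ) = (x : ℕ) + 1 ∧ σ ≤ (x : ℕ)) := by omega
      simp [h2]
    · rw [if_neg h1, if_neg h1]
      by_cases h5 : (x : ℕ) = (i : ℕ) + 1 ∧ σ ≤ (i : ℕ)
      · rw [if_pos ⟨h5.1, h5.2⟩, if_pos h5, zero_add]
      · rw [if_neg (fun hc : (x:ℕ) = (i:ℕ)+1 ∧ σ ≤ (i:ℕ) => h5 hc), if_neg h5, zero_mul,
          zero_add]
  rw [Finset.sum_congr rfl (fun x _ => key x), Finset.sum_add_distrib]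
  congr 1
  · simp
  · by_cases h : σ ≤ (i : ℕ) ∧ (i : ℕ) + 1 < d
    · rw [dif_pos h]
      have heq : ∀ x : Fin d, ((x : ℕ) = (i : ℕ) + 1 ∧ σ ≤ (i : ℕ))
          ↔ x = (⟨(i : ℕ) + 1, h.2⟩ : Fin d) := by
        intro x; simp [Fin.ext_iff, h.1]
      rw [Finset.sum_congr rfl (fun x _ => by rw [if_congr (heq x) rfl rfl])]
      simp
    · rw [dif_neg h]
      apply Finset.sum_eq_zero
      intro x _
      rw [if_neg]
      rintro ⟨h1, h2⟩
      exact h ⟨h2, by have := x.isLt; omega⟩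

lemma runAux_eq_Tmat (a : ℝ) : ∀ t, t ≤ d - 1 → runAux a d t = Tmat a d (d - 1 - t) := by
  intro t
  induction t with
  | zero =>
      intro _
      ext i j
      show (1 : Matrix (Fin d) (Fin d) ℝ) i j = Tmat a d (d - 1 - 0) i j
      simp only [Tmat, Matrix.of_apply]
      by_cases h1 : j = i
      · subst h1; rw [Matrix.one_apply_eq, if_pos rfl]
      · rw [Matrix.one_apply_ne (fun h => h1 h.symm), if_neg h1, if_neg]
        rintro ⟨p, q⟩
        have := j.isLt
        omega
  | succ t ih =>
      intro ht
      have hs : d - 1 - t = (d - 2 - t) + 1 := by omega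
      rw [runAux, ih (by omega), hs]
      set s := d - 2 - t with hsdef
      have hgoal : d - 1 - (t + 1) = s := by omega
      rw [hgoal]
      ext i j
      rw [mul_Emat_apply]
      simp only [Tmat, Matrix.of_apply]
      by_cases h1 : j = i
      · subst h1
        rw [if_pos rfl, if_pos rfl]
        by_cases h2 : (j : ℕ) = s + 1
        · rw [dif_pos h2]
          have h3 : ¬ ((⟨s, by omega⟩ : Fin d) = j) := by
            simp [Fin.ext_iff]; omega
          have h4 : ¬ ((s : ℕ) = (j : ℕ) + 1 ∧ s + 1 ≤ (j : ℕ)) := by omega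
          rw [if_neg h3]
          rw [if_neg h4, mul_zero, add_zero]
        · rw [dif_neg h2, add_zero]
      · rw [if_neg h1, if_neg h1]
        by_cases h2 : (j : ℕ) = s + 1
        · rw [dif_pos h2]
          by_cases h3 : (i : ℕ) = s
          · have h4 : ¬ ((j:ℕ) = (i:ℕ) + 1 ∧ s + 1 ≤ (i:ℕ)) := by omega
            have h5 : (j:ℕ) = (i:ℕ) + 1 ∧ s ≤ (i:ℕ) := by omega
            have h6 : (⟨s, by omega⟩ : Fin d) = i := by simp [Fin.ext_iff]; omega
            rw [if_neg h4, if_pos h5, if_pos h6, mul_one, zero_add]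
          · have h6 : ¬ ((⟨s, by omega⟩ : Fin d) = i) := by
              intro hc
              exact h3 (by rw [← hc])
            have h7 : ¬ ((s:ℕ) = (i:ℕ) + 1 ∧ s + 1 ≤ (i:ℕ)) := by omega
            rw [if_neg h6, if_neg h7, mul_zero, add_zero]
            have h8 : ((j:ℕ) = (i:ℕ) + 1 ∧ s + 1 ≤ (i:ℕ)) ↔ ((j:ℕ) = (i:ℕ) + 1 ∧ s ≤ (i:ℕ)) := by
              constructor <;> (rintro ⟨p, q⟩; exact ⟨p, by omega⟩)
            rw [if_congr h8 rfl rfl]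
        · rw [dif_neg h2, add_zero]
          have h8 : ((j:ℕ) = (i:ℕ) + 1 ∧ s + 1 ≤ (i:ℕ)) ↔ ((j:ℕ) = (i:ℕ) + 1 ∧ s ≤ (i:ℕ)) := by
            constructor <;> (rintro ⟨p, q⟩; refine ⟨p, by omega⟩)
          rw [if_congr h8 rfl rfl]

def Gmat (a : ℝ) (d n : ℕ) : Matrix (Fin d) (Fin d) ℝ :=
  Matrix.of fun i j : Fin d =>
    if (i : ℕ) < d - 1 - n then (if (j : ℕ) = (i : ℕ) then 1 else 0)
    else if (i : ℕ) ≤ (j : ℕ) then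
      ((((j : ℕ) - (d - 1 - n)).choose ((i : ℕ) - (d - 1 - n)) : ℝ)) * a ^ ((j : ℕ) - (i : ℕ))
    else 0

def sufAux (a : ℝ) (d : ℕ) : ℕ → Matrix (Fin d) (Fin d) ℝ
  | 0 => 1
  | n + 1 => Tmat a d (d - 2 - n) * sufAux a d n

lemma sufAux_eq_Gmat (a : ℝ) : ∀ n, n ≤ d - 1 → sufAux a d n = Gmat a d n := by
  intro n
  induction n with
  | zero =>
      intro _
      ext i j
      show (1 : Matrix (Fin d) (Fin d) ℝ) i j = Gmat a d 0 i j
      have hi := i.isLt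
      have hj := j.isLt
      simp only [Gmat, Matrix.of_apply, Matrix.one_apply]
      by_cases h0 : (i : ℕ) < d - 1 - 0
      · rw [if_pos h0]
        by_cases hij : i = j
        · subst hij; rw [if_pos rfl, if_pos rfl]
        · have : (i:ℕ) ≠ (j:ℕ) := fun hc => hij (Fin.ext hc)
          rw [if_neg hij, if_neg (by omega : ¬ (j:ℕ) = (i:ℕ))]
      · rw [if_neg h0]
        by_cases hij : i = j
        · subst hij
          rw [if_pos rfl, if_pos (le_refl _)]
          have h1 : (i:ℕ) - (d - 1 - 0) = 0 := by omega
          rw [h1, Nat.sub_self, pow_zero]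
          norm_num
        · have hne : (i:ℕ) ≠ (j:ℕ) := fun hc => hij (Fin.ext hc)
          rw [if_neg hij, if_neg (by omega : ¬ (i:ℕ) ≤ (j:ℕ))]
  | succ n ih =>
      intro hn
      show Tmat a d (d - 2 - n) * sufAux a d n = Gmat a d (n + 1)
      rw [ih (by omega)]
      set b := d - 1 - n with hbdef
      set σ := d - 2 - n with hσdef
      have hb1 : 1 ≤ b := by omega
      have hσb : σ + 1 = b := by omega
      have hoff : d - 1 - (n + 1) = σ := by omega
      ext i j
      rw [Tmat_mul_apply]
      simp only [Gmat, Matrix.of_apply, hoff]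
      have hi := i.isLt
      have hj := j.isLt
      by_cases hA : (i : ℕ) < σ
      · rw [if_pos hA, if_pos (by omega : (i:ℕ) < b),
          dif_neg (by omega : ¬ (σ ≤ (i:ℕ) ∧ (i:ℕ) + 1 < d)), add_zero]
      · rw [if_neg hA]
        by_cases hguard : σ ≤ (i:ℕ) ∧ (i:ℕ) + 1 < d
        · rw [dif_pos hguard]
          rw [if_neg (by omega : ¬ ((i:ℕ) + 1 < b))]
          by_cases hB : (i:ℕ) = σ
          · rw [if_pos (by omega : (i:ℕ) < b)]
            by_cases hij : (i:ℕ) ≤ (j:ℕ)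
            · rw [if_pos hij]
              have h2 : (i:ℕ) - σ = 0 := by omega
              have h3 : (j:ℕ) - σ ≥ 0 := by omega
              rw [h2, Nat.choose_zero_right]
              by_cases hjeq : (j:ℕ) = (i:ℕ)
              · rw [if_pos hjeq, if_neg (by omega : ¬ ((i:ℕ)+1 ≤ (j:ℕ))), mul_zero,
                  add_zero]
                have : (j:ℕ) - (i:ℕ) = 0 := by omega
                rw [this, pow_zero]
                norm_num
              · rw [if_neg hjeq, if_pos (by omega : (i:ℕ)+1 ≤ (j:ℕ))]
                have h4 : (i:ℕ)+1-b = 0 := by omega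
                rw [h4, Nat.choose_zero_right]
                have h5 : (j:ℕ) - (i:ℕ) = ((j:ℕ) - ((i:ℕ)+1)) + 1 := by omega
                rw [h5, pow_succ]
                push_cast
                ring
            · rw [if_neg hij, if_neg (by omega : ¬ ((j:ℕ) = (i:ℕ))),
                if_neg (by omega : ¬ ((i:ℕ)+1 ≤ (j:ℕ))), mul_zero, add_zero]
          · -- i > σ, so i ≥ b
            rw [if_neg (by omega : ¬ ((i:ℕ) < b))]
            by_cases hij : (i:ℕ) ≤ (j:ℕ)
            · rw [if_pos hij]
              by_cases hjeq : (j:ℕ) = (i:ℕ)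
              · rw [if_neg (by omega : ¬ ((i:ℕ)+1 ≤ (j:ℕ))), mul_zero, add_zero, hjeq,
                  Nat.choose_self, Nat.choose_self, if_pos (le_refl ((i:ℕ)))]
              · rw [if_pos (by omega : (i:ℕ)+1 ≤ (j:ℕ))]
                have h5 : (j:ℕ) - σ = ((j:ℕ) - b) + 1 := by omega
                have h6 : (i:ℕ) - σ = ((i:ℕ) - b) + 1 := by omega
                have h7 : (i:ℕ) + 1 - b = ((i:ℕ) - b) + 1 := by omega
                rw [if_pos hij, h5, h6, h7, Nat.choose_succ_succ]
                have h8 : (j:ℕ) - (i:ℕ) = ((j:ℕ) - ((i:ℕ)+1)) + 1 := by omega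
                rw [h8, pow_succ]
                push_cast
                ring
            · rw [if_neg hij, if_neg (by omega : ¬ ((i:ℕ)+1 ≤ (j:ℕ))), mul_zero, add_zero,
                if_neg hij]
        · rw [dif_neg hguard, add_zero]
          have hlast : (i:ℕ) + 1 = d := by omega
          rw [if_neg (by omega : ¬ ((i:ℕ) < b))]
          by_cases hij : (i:ℕ) ≤ (j:ℕ)
          · have hje : (j:ℕ) = (i:ℕ) := by omega
            rw [if_pos hij, if_pos hij, hje]
            rw [Nat.choose_self, Nat.choose_self]
          · rw [if_neg hij, if_neg hij]

def prefAux (a : ℝ) (d : ℕ) : ℕ → Matrix (Fin d) (Fin d) ℝ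
  | 0 => 1
  | r + 1 => prefAux a d r * runAux a d (d - 1 - r)

lemma good_prefAux {a : ℝ} (ha : 0 ≤ a) : ∀ r, Good (prefAux a d r) := by
  intro r
  induction r with
  | zero => exact good_one
  | succ r ih => exact good_mul_runAux ih ha _

lemma prefAux_swap (a : ℝ) : ∀ r, r ≤ d - 1 →
    prefAux a d r * sufAux a d (d - 1 - r) = sufAux a d (d - 1) := by
  intro r
  induction r with
  | zero => intro _; rw [prefAux, one_mul, Nat.sub_zero]
  | succ r ih =>
      intro hr
      have h1 : d - 1 - r = (d - 2 - r) + 1 := by omega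
      have h2 : d - 1 - (r + 1) = d - 2 - r := by omega
      have h3 : runAux a d (d - 1 - r) = Tmat a d r := by
        have e1 : d - 1 - (d - 1 - r) = r := by omega
        rw [runAux_eq_Tmat a (d - 1 - r) (by omega), e1]
      have h4 : sufAux a d (d - 1 - r) = Tmat a d r * sufAux a d (d - 2 - r) := by
        have e2 : d - 2 - (d - 2 - r) = r := by omega
        rw [h1]
        show Tmat a d (d - 2 - (d - 2 - r)) * sufAux a d (d - 2 - r) = _
        rw [e2]
      rw [prefAux, h2, h3, Matrix.mul_assoc, ← h4, ih (by omega)]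

lemma prefAux_eq_Pmat (a : ℝ) (hd : 1 ≤ d) : prefAux a d (d - 1) = Pmat a d := by
  have h1 := prefAux_swap a (d - 1) le_rfl
  rw [Nat.sub_self] at h1
  have h2 : sufAux a d 0 = 1 := rfl
  rw [h2, mul_one] at h1
  rw [h1, sufAux_eq_Gmat a (d - 1) le_rfl]
  ext i j
  simp only [Gmat, Pmat, Matrix.of_apply, Nat.sub_self]
  rw [if_neg (by omega : ¬ ((i : ℕ) < 0))]
  by_cases hij : (i : ℕ) ≤ (j : ℕ)
  · rw [if_pos hij, if_pos hij, Nat.sub_zero, Nat.sub_zero]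
  · rw [if_neg hij, if_neg hij]

lemma outer_bound {a : ℝ} (ha : 0 < a) (I J : Fin k → Fin d) (hI : StrictMono I)
    (hJ : StrictMono J) (hIJ : ∀ m, I m ≤ J m) :
    ∀ r, r ≤ d - 1 →
      a ^ (∑ m, (min ((I m : ℕ) + r) (J m : ℕ) - (I m : ℕ)))
        ≤ ((prefAux a d r).submatrix I
            (fun m => (⟨min ((I m : ℕ) + r) (J m : ℕ),
              lt_of_le_of_lt (min_le_right _ _) (J m).isLt⟩ : Fin d))).det := by
  have hIJn : ∀ m, (I m : ℕ) ≤ (J m : ℕ) := fun m => hIJ m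
  intro r
  induction r with
  | zero =>
      intro _
      have hC : (fun m => (⟨min ((I m : ℕ) + 0) (J m : ℕ),
          lt_of_le_of_lt (min_le_right _ _) (J m).isLt⟩ : Fin d)) = I := by
        funext m
        apply Fin.ext
        show min ((I m : ℕ) + 0) ((J m : ℕ)) = (I m : ℕ)
        have := hIJn m
        omega
      rw [hC]
      have hsum : (∑ m, (min ((I m : ℕ) + 0) (J m : ℕ) - (I m : ℕ))) = 0 := by
        apply Finset.sum_eq_zero
        intro m _
        have := hIJn m
        omega
      rw [hsum, pow_zero]
      have h0 : prefAux a d 0 = (1 : Matrix (Fin d) (Fin d) ℝ) := rfl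
      rw [h0, det_submatrix_self _ good_one.upper good_one.diag hI]
  | succ r ih =>
      intro hr
      have hIHr := ih (by omega)
      set C : Fin k → Fin d := fun m => (⟨min ((I m : ℕ) + r) (J m : ℕ),
        lt_of_le_of_lt (min_le_right _ _) (J m).isLt⟩ : Fin d) with hCdef
      set C' : Fin k → Fin d := fun m => (⟨min ((I m : ℕ) + (r + 1)) (J m : ℕ),
        lt_of_le_of_lt (min_le_right _ _) (J m).isLt⟩ : Fin d) with hC'def
      have hCval : ∀ m, (C m : ℕ) = min ((I m : ℕ) + r) (J m : ℕ) := fun m => rfl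
      have hC'val : ∀ m, (C' m : ℕ) = min ((I m : ℕ) + (r + 1)) (J m : ℕ) := fun m => rfl
      have hCm : StrictMono C := by
        intro m m' hmm
        rw [Fin.lt_def, hCval, hCval]
        have h1 : (I m : ℕ) < (I m' : ℕ) := hI hmm
        have h2 : (J m : ℕ) < (J m' : ℕ) := hJ hmm
        omega
      have hC'm : StrictMono C' := by
        intro m m' hmm
        rw [Fin.lt_def, hC'val, hC'val]
        have h1 : (I m : ℕ) < (I m' : ℕ) := hI hmm
        have h2 : (J m : ℕ) < (J m' : ℕ) := hJ hmm
        omega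
      have hIC : ∀ m, I m ≤ C m := by
        intro m
        rw [Fin.le_def, hCval]
        have := hIJn m
        omega
      have hcond : ∀ m, (C' m : ℕ) = (C m : ℕ) ∨
          ((C' m : ℕ) = (C m : ℕ) + 1 ∧ d - 1 - (d - 1 - r) ≤ (C m : ℕ)) := by
        intro m
        rw [hCval, hC'val]
        have h1 : d - 1 - (d - 1 - r) ≤ r := by omega
        have := hIJn m
        omega
      have hrun := run_lemma ha (good_prefAux ha.le r) (d - 1 - r) (by omega)
        I C C' hI hCm hC'm hIC hcond
      have hpref : prefAux a d r * runAux a d (d - 1 - r) = prefAux a d (r + 1) := rfl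
      rw [hpref] at hrun
      have hsum : (∑ m, (min ((I m : ℕ) + (r + 1)) (J m : ℕ) - (I m : ℕ)))
          = (∑ m, ((C' m : ℕ) - (C m : ℕ)))
            + (∑ m, (min ((I m : ℕ) + r) (J m : ℕ) - (I m : ℕ))) := by
        rw [← Finset.sum_add_distrib]
        apply Finset.sum_congr rfl
        intro m _
        rw [hCval, hC'val]
        have := hIJn m
        omega
      calc a ^ (∑ m, (min ((I m : ℕ) + (r + 1)) (J m : ℕ) - (I m : ℕ)))
          = a ^ (∑ m, ((C' m : ℕ) - (C m : ℕ)))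
            * a ^ (∑ m, (min ((I m : ℕ) + r) (J m : ℕ) - (I m : ℕ))) := by
            rw [hsum, pow_add]
        _ ≤ a ^ (∑ m, ((C' m : ℕ) - (C m : ℕ))) * ((prefAux a d r).submatrix I C).det :=
            mul_le_mul_of_nonneg_left hIHr (pow_nonneg ha.le _)
        _ ≤ ((prefAux a d (r + 1)).submatrix I C').det := hrun

lemma Pmat_minor_pos {a : ℝ} (hd : 1 ≤ d) (ha : 0 < a) (I J : Fin k → Fin d)
    (hI : StrictMono I) (hJ : StrictMono J) (hIJ : ∀ m, I m ≤ J m) :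
    0 < ((Pmat a d).submatrix I J).det := by
  have h := outer_bound ha I J hI hJ hIJ (d - 1) le_rfl
  have hC : (fun m => (⟨min ((I m : ℕ) + (d - 1)) (J m : ℕ),
      lt_of_le_of_lt (min_le_right _ _) (J m).isLt⟩ : Fin d)) = J := by
    funext m
    refine Fin.ext ?_
    have h1 : (I m : ℕ) ≤ (J m : ℕ) := hIJ m
    have h2 := (J m).isLt
    simp only []
    omega
  rw [hC, prefAux_eq_Pmat a hd] at h
  exact lt_of_lt_of_le (pow_pos ha _) h

end TPAux

/-- The matrix of `τ_d` on the unipotent element `[[1,a],[0,1]]` is the upper triangular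
matrix with (1-based) `(k,j)` entry `binom(j−1, k−1) a^{j−k}` for `k ≤ j`, and `0` for
`k > j`; moreover, when `a > 0` this matrix is totally positive with respect to the
standard basis. -/
theorem tauRep_unipotent_eq_and_totallyPositive (d : ℕ) (hd : 1 ≤ d) (a : ℝ) :
    tauRep d !![1, a; 0, 1] =
      (Matrix.of fun i j : Fin d =>
        if (i : ℕ) ≤ (j : ℕ) then ((j : ℕ).choose (i : ℕ) : ℝ) * a ^ ((j : ℕ) - (i : ℕ))
        else 0) ∧
    (0 < a → IsTotallyPositiveUpper (tauRep d !![1, a; 0, 1])) := by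
  have hmain : tauRep d !![1, a; 0, 1] =
      (Matrix.of fun i j : Fin d =>
        if (i : ℕ) ≤ (j : ℕ) then ((j : ℕ).choose (i : ℕ) : ℝ) * a ^ ((j : ℕ) - (i : ℕ))
        else 0) := by
    ext i j
    have hi : (i : ℕ) < d := i.isLt
    have hj : (j : ℕ) < d := j.isLt
    have g00 : !![(1:ℝ), a; 0, 1] 0 0 = 1 := rfl
    have g01 : !![(1:ℝ), a; 0, 1] 0 1 = a := rfl
    have g10 : !![(1:ℝ), a; 0, 1] 1 0 = 0 := rfl
    have g11 : !![(1:ℝ), a; 0, 1] 1 1 = 1 := rfl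
    simp only [tauRep, Matrix.of_apply, g00, g01, g10, g11, one_pow, mul_one, one_mul]
    rw [Finset.sum_eq_single (d - 1 - (j : ℕ))]
    · by_cases h : (i : ℕ) ≤ (j : ℕ)
      · have h1 : d - 1 - (j:ℕ) ≤ d - 1 - (i:ℕ) := by omega
        have h2 : d - 1 - (j:ℕ) - (d - 1 - (j:ℕ)) = 0 := by omega
        have h3 : d - 1 - (i:ℕ) - (d - 1 - (j:ℕ)) = (j:ℕ) - (i:ℕ) := by omega
        rw [if_pos h1, if_pos h, h2, h3, pow_zero, Nat.choose_self]
        have h4 : (j:ℕ).choose ((j:ℕ) - (i:ℕ)) = (j:ℕ).choose (i:ℕ) := Nat.choose_symm h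
        rw [h4]
        ring
      · have h1 : ¬ (d - 1 - (j:ℕ) ≤ d - 1 - (i:ℕ)) := by omega
        rw [if_neg h1, if_neg h]
    · intro l _ hl
      by_cases h : l ≤ d - 1 - (i:ℕ)
      · rw [if_pos h]
        rcases lt_or_gt_of_ne hl with hlt | hgt
        · have : (0:ℝ) ^ (d - 1 - (j:ℕ) - l) = 0 := by
            apply zero_pow; omega
          rw [this]; ring
        · have : (d - 1 - (j:ℕ)).choose l = 0 := Nat.choose_eq_zero_of_lt hgt
          rw [this]; push_cast; ring
      · rw [if_neg h]
    · intro h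
      exact absurd (Finset.mem_range.mpr (by omega)) h
  refine ⟨hmain, ?_⟩
  intro ha
  rw [hmain]
  refine ⟨?_, ?_⟩
  · intro i j hji
    simp only [Matrix.of_apply]
    rw [if_neg]
    have := Fin.lt_def.mp hji
    omega
  · intro k I J hI hJ hIJ
    show 0 < ((TPAux.Pmat a d).submatrix I J).det
    exact TPAux.Pmat_minor_pos hd ha I J hI hJ hIJ
end

section
/- Let {g_n} be a sequence in SL(d, ℝ) and let k ∈ {1,…,d−1}. Suppose σ_k(g_n)/σ_{k+1}(g_n) → ∞, U_k(g_n) → V₀ in the Grassmannian Gr_k(ℝ^d), and U_{d−k}(g_n⁻¹) → W₀ in Gr_{d−k}(ℝ^d). Then for every V ∈ Gr_k(ℝ^d) transverse to W₀ (i.e. V ∩ W₀ = 0), g_n(V) → V₀. -/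
open scoped Topology Matrix

noncomputable section

/-- The orthogonal projection onto a subspace of Euclidean space, as an endomorphism.
Convergence of subspaces in the Grassmannian is encoded as convergence of these
projections. -/
def projOnto {d : ℕ} (V : Submodule ℝ (EuclideanSpace ℝ (Fin d))) :
    EuclideanSpace ℝ (Fin d) →L[ℝ] EuclideanSpace ℝ (Fin d) :=
  V.subtypeL.comp (V.orthogonalProjection)

/-- The span of the first `k` standard coordinates of `ℝ^d`. -/
def firstCoords (d k : ℕ) : Submodule ℝ (EuclideanSpace ℝ (Fin d)) where
  carrier := {x | ∀ i : Fin d, k ≤ (i : ℕ) → x i = 0}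
  add_mem' := by intro x y hx hy i hi; simp [hx i hi, hy i hi]
  zero_mem' := by intro i _; rfl
  smul_mem' := by intro c x hx i hi; simp [hx i hi]

/-- The span of the last `d - k` standard coordinates of `ℝ^d`. -/
def lastCoords (d k : ℕ) : Submodule ℝ (EuclideanSpace ℝ (Fin d)) where
  carrier := {x | ∀ i : Fin d, (i : ℕ) < k → x i = 0}
  add_mem' := by intro x y hx hy i hi; simp [hx i hi, hy i hi]
  zero_mem' := by intro i _; rfl
  smul_mem' := by intro c x hx i hi; simp [hx i hi]

lemma toEucLin_mul {d : ℕ} (M N : Matrix (Fin d) (Fin d) ℝ) :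
    Matrix.toEuclideanLin (M * N) =
      (Matrix.toEuclideanLin M) ∘ₗ (Matrix.toEuclideanLin N) := by
  ext x
  simp [Matrix.toEuclideanLin_apply, Matrix.mulVec_mulVec]

lemma dot_eq {d : ℕ} (M : Matrix (Fin d) (Fin d) ℝ) (h : Mᵀ * M = 1)
    (x y : Fin d → ℝ) : (M *ᵥ x) ⬝ᵥ (M *ᵥ y) = x ⬝ᵥ y := by
  rw [Matrix.dotProduct_mulVec, ← Matrix.vecMul_transpose, Matrix.vecMul_vecMul, h,
    Matrix.vecMul_one]

/-- orthogonal matrix as a linear isometry equivalence -/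
def mIso {d : ℕ} (M : Matrix (Fin d) (Fin d) ℝ) (h : M * Mᵀ = 1) :
    EuclideanSpace ℝ (Fin d) ≃ₗᵢ[ℝ] EuclideanSpace ℝ (Fin d) :=
  LinearEquiv.isometryOfInner
    (LinearEquiv.ofLinear (Matrix.toEuclideanLin M) (Matrix.toEuclideanLin Mᵀ)
      (by rw [← toEucLin_mul, h]; ext x; simp [Matrix.toEuclideanLin_apply])
      (by rw [← toEucLin_mul, mul_eq_one_comm.mp h]; ext x
          simp [Matrix.toEuclideanLin_apply]))
    (by
      intro x y
      simp only [LinearEquiv.ofLinear_apply]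
      have := dot_eq M (mul_eq_one_comm.mp h) (fun i => x i) (fun i => y i)
      simpa [PiLp.inner_apply, Matrix.toEuclideanLin_apply, dotProduct,
        mul_comm] using this)

lemma mIso_coe {d : ℕ} (M : Matrix (Fin d) (Fin d) ℝ) (h : M * Mᵀ = 1) (x) :
    mIso M h x = Matrix.toEuclideanLin M x := rfl

lemma mIso_symm_coe {d : ℕ} (M : Matrix (Fin d) (Fin d) ℝ) (h : M * Mᵀ = 1) (x) :
    (mIso M h).symm x = Matrix.toEuclideanLin Mᵀ x := rfl

lemma projOnto_apply_mem {d : ℕ} (V : Submodule ℝ (EuclideanSpace ℝ (Fin d))) (x) :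
    projOnto V x ∈ V := (V.orthogonalProjectionOnto x).2

lemma norm_projOnto_apply_le {d : ℕ} (V : Submodule ℝ (EuclideanSpace ℝ (Fin d))) (x) :
    ‖projOnto V x‖ ≤ ‖x‖ := by
  have h := Submodule.orthogonalProjectionOnto_norm_le V
  have := (V.orthogonalProjectionOnto).le_opNorm x
  calc ‖projOnto V x‖ = ‖V.orthogonalProjectionOnto x‖ := rfl
    _ ≤ ‖V.orthogonalProjectionOnto‖ * ‖x‖ := this
    _ ≤ 1 * ‖x‖ := by gcongr
    _ = ‖x‖ := one_mul _

lemma projOnto_eq_of {d : ℕ} (V : Submodule ℝ (EuclideanSpace ℝ (Fin d))) (x v : EuclideanSpace ℝ (Fin d))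
    (hv : v ∈ V) (ho : ∀ w ∈ V, (inner ℝ w (x - v) : ℝ) = 0) : projOnto V x = v := by
  have : x - v ∈ Vᗮ := (Submodule.mem_orthogonal V (x - v)).2 ho
  exact Submodule.eq_starProjection_of_mem_orthogonal hv this

lemma mem_firstCoords {d k : ℕ} (x : EuclideanSpace ℝ (Fin d)) :
    x ∈ firstCoords d k ↔ ∀ i : Fin d, k ≤ (i : ℕ) → x i = 0 := Iff.rfl

lemma projOnto_firstCoords_apply {d k : ℕ} (x : EuclideanSpace ℝ (Fin d)) :
    projOnto (firstCoords d k) x = fun i : Fin d => if (i : ℕ) < k then x i else 0 := by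
  apply congrArg WithLp.ofLp (projOnto_eq_of _ x
    (WithLp.toLp 2 (fun i : Fin d => if (i : ℕ) < k then x i else 0)) ?_ ?_)
  · intro i hi
    simp only []
    rw [if_neg (by omega)]
  · intro w hw
    rw [PiLp.inner_apply]
    apply Finset.sum_eq_zero
    intro j _
    rcases lt_or_ge (j : ℕ) k with h | h
    · simp [if_pos h]
    · simp [hw j h]

lemma projOnto_map_iso {d : ℕ} (Q : EuclideanSpace ℝ (Fin d) ≃ₗᵢ[ℝ] EuclideanSpace ℝ (Fin d))
    (W : Submodule ℝ (EuclideanSpace ℝ (Fin d))) :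
    projOnto (W.map (Q.toLinearEquiv : EuclideanSpace ℝ (Fin d) →ₗ[ℝ] EuclideanSpace ℝ (Fin d)))
      = (Q.toLinearIsometry.toContinuousLinearMap.comp
          ((projOnto W).comp Q.symm.toLinearIsometry.toContinuousLinearMap)) := by
  refine ContinuousLinearMap.ext fun x => ?_
  simp only [projOnto, ContinuousLinearMap.coe_comp', Function.comp_apply,
    Submodule.coe_subtypeL', Submodule.coe_subtype, LinearIsometry.coe_toContinuousLinearMap,
    LinearIsometryEquiv.coe_toLinearIsometry]
  exact Submodule.starProjection_map_apply Q W x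

lemma norm_conj {d : ℕ} (Q : EuclideanSpace ℝ (Fin d) ≃ₗᵢ[ℝ] EuclideanSpace ℝ (Fin d))
    (T : EuclideanSpace ℝ (Fin d) →L[ℝ] EuclideanSpace ℝ (Fin d)) :
    ‖Q.toLinearIsometry.toContinuousLinearMap.comp
      (T.comp Q.symm.toLinearIsometry.toContinuousLinearMap)‖ = ‖T‖ := by
  rw [LinearIsometry.norm_toContinuousLinearMap_comp]
  exact T.opNorm_comp_linearIsometryEquiv Q.symm

lemma norm_sq_coords {d : ℕ} (x : EuclideanSpace ℝ (Fin d)) :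
    ‖x‖ ^ 2 = ∑ i, x i * x i := by
  rw [← real_inner_self_eq_norm_sq, PiLp.inner_apply]
  simp [RCLike.inner_apply, sq]

lemma sq_le_of_le {x y : ℝ} (hx : 0 ≤ x) (hy : 0 ≤ y) (h : x ^ 2 ≤ y ^ 2) : x ≤ y := by
  nlinarith

lemma closest_point {d : ℕ} (S : Submodule ℝ (EuclideanSpace ℝ (Fin d)))
    (x u : EuclideanSpace ℝ (Fin d)) (hu : u ∈ S) :
    ‖x - projOnto S x‖ ≤ ‖x - u‖ := by
  have hmem : x - projOnto S x ∈ Sᗮ := Submodule.sub_starProjection_mem_orthogonal x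
  have hmem2 : projOnto S x - u ∈ S := S.sub_mem (projOnto_apply_mem S x) hu
  have hinner : (inner ℝ (x - projOnto S x) (projOnto S x - u) : ℝ) = 0 := by
    rw [real_inner_comm]
    exact hmem _ hmem2
  have hdecomp : x - u = (x - projOnto S x) + (projOnto S x - u) := by abel
  have hsq : ‖x - u‖ ^ 2 = ‖x - projOnto S x‖ ^ 2 + ‖projOnto S x - u‖ ^ 2 := by
    rw [hdecomp, norm_add_sq_real, hinner]; ring
  apply sq_le_of_le (norm_nonneg _) (norm_nonneg _)
  rw [hsq]
  nlinarith [sq_nonneg ‖projOnto S x - u‖]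

lemma gap_lemma {d : ℕ} (F S : Submodule ℝ (EuclideanSpace ℝ (Fin d)))
    (hdim : Module.finrank ℝ S = Module.finrank ℝ F) {ε : ℝ} (hε0 : 0 ≤ ε) (hε : ε ≤ 1/2)
    (h : ∀ u ∈ S, ‖u - projOnto F u‖ ≤ ε * ‖u‖) :
    ‖projOnto S - projOnto F‖ ≤ 3 * ε := by
  -- the map `P_F` restricted to `S` is injective
  have hinj : ∀ u ∈ S, projOnto F u = 0 → u = 0 := by
    intro u hu hu0
    have h1 : ‖u‖ ≤ ε * ‖u‖ := by
      have := h u hu; rwa [hu0, sub_zero] at this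
    have : ‖u‖ = 0 := by nlinarith [norm_nonneg u]
    simpa using this
  -- `S.map P_F = F`
  have hmap : S.map (projOnto F : EuclideanSpace ℝ (Fin d) →ₗ[ℝ] EuclideanSpace ℝ (Fin d)) = F := by
    have hle : S.map (projOnto F : EuclideanSpace ℝ (Fin d) →ₗ[ℝ] EuclideanSpace ℝ (Fin d)) ≤ F := by
      rintro _ ⟨u, hu, rfl⟩
      exact projOnto_apply_mem F u
    have hrank : Module.finrank ℝ
        (S.map (projOnto F : EuclideanSpace ℝ (Fin d) →ₗ[ℝ] EuclideanSpace ℝ (Fin d)))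
        = Module.finrank ℝ S := by
      set g := ((projOnto F : EuclideanSpace ℝ (Fin d) →ₗ[ℝ] EuclideanSpace ℝ (Fin d))).comp
          S.subtype with hg
      have hginj : Function.Injective g := by
        rw [← LinearMap.ker_eq_bot, LinearMap.ker_eq_bot']
        intro u hu0
        have := hinj u u.2 hu0
        exact Subtype.ext this
      have hr : LinearMap.range g =
          S.map (projOnto F : EuclideanSpace ℝ (Fin d) →ₗ[ℝ] EuclideanSpace ℝ (Fin d)) := by
        rw [hg, LinearMap.range_comp, Submodule.range_subtype]
      rw [← hr, LinearMap.finrank_range_of_inj hginj]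
    exact Submodule.eq_of_le_of_finrank_le hle (by rw [hrank, hdim])
  -- quantitative surjectivity
  have hB : ∀ y, ‖projOnto F y - projOnto S (projOnto F y)‖ ≤ 2 * ε * ‖y‖ := by
    intro y
    set x := projOnto F y with hx
    have hxF : x ∈ F := projOnto_apply_mem F y
    rw [← hmap] at hxF
    obtain ⟨u, hu, hux⟩ := hxF
    have h1 : ‖u - x‖ ≤ ε * ‖u‖ := by
      have := h u hu
      rwa [show projOnto F u = x from hux] at this
    have h2 : ‖u‖ ≤ 2 * ‖x‖ := by
      have : ‖u‖ ≤ ‖u - x‖ + ‖x‖ := by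
        simpa using norm_add_le (u - x) x
      nlinarith [norm_nonneg u, norm_nonneg x]
    have h3 : ‖x - projOnto S x‖ ≤ ‖x - u‖ := closest_point S x u hu
    have h4 : ‖x - u‖ ≤ 2 * ε * ‖x‖ := by
      rw [norm_sub_rev]; nlinarith [norm_nonneg u]
    calc ‖x - projOnto S x‖ ≤ 2 * ε * ‖x‖ := h3.trans h4
      _ ≤ 2 * ε * ‖y‖ := by
          have := norm_projOnto_apply_le F y
          nlinarith [norm_nonneg y]
  -- operator norm bounds
  have hBop : ‖(1 - projOnto S) * projOnto F‖ ≤ 2 * ε := by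
    apply ContinuousLinearMap.opNorm_le_bound _ (by positivity)
    intro y
    have := hB y
    simpa [ContinuousLinearMap.mul_apply, sub_mul, ContinuousLinearMap.sub_apply] using this
  have hAop : ‖(1 - projOnto F) * projOnto S‖ ≤ ε := by
    apply ContinuousLinearMap.opNorm_le_bound _ hε0
    intro x
    have h1 : ‖projOnto S x - projOnto F (projOnto S x)‖ ≤ ε * ‖projOnto S x‖ :=
      h _ (projOnto_apply_mem S x)
    have h2 : ‖projOnto S x‖ ≤ ‖x‖ := norm_projOnto_apply_le S x
    calc ‖((1 - projOnto F) * projOnto S) x‖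
        = ‖projOnto S x - projOnto F (projOnto S x)‖ := by
          simp [ContinuousLinearMap.mul_apply, ContinuousLinearMap.sub_apply]
      _ ≤ ε * ‖projOnto S x‖ := h1
      _ ≤ ε * ‖x‖ := by nlinarith
  -- adjoint trick
  have hsaS : IsSelfAdjoint (projOnto S) := isSelfAdjoint_starProjection S
  have hsaF : IsSelfAdjoint (projOnto F) := isSelfAdjoint_starProjection F
  have hAop' : ‖projOnto S * (1 - projOnto F)‖ ≤ ε := by
    have hadj : ContinuousLinearMap.adjoint ((1 - projOnto F) * projOnto S)
        = projOnto S * (1 - projOnto F) := by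
      rw [ContinuousLinearMap.mul_def, ContinuousLinearMap.mul_def,
        ContinuousLinearMap.adjoint_comp, hsaS.adjoint_eq]
      congr 1
      rw [map_sub, hsaF.adjoint_eq]
      congr 1
      exact ContinuousLinearMap.adjoint_id
    calc ‖projOnto S * (1 - projOnto F)‖
        = ‖ContinuousLinearMap.adjoint ((1 - projOnto F) * projOnto S)‖ := by rw [hadj]
      _ = ‖(1 - projOnto F) * projOnto S‖ :=
          ContinuousLinearMap.adjoint.norm_map _
      _ ≤ ε := hAop
  have hdeco : projOnto S - projOnto F
      = projOnto S * (1 - projOnto F) - (1 - projOnto S) * projOnto F := by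
    simp only [mul_sub, sub_mul, mul_one, one_mul]; abel
  calc ‖projOnto S - projOnto F‖
      = ‖projOnto S * (1 - projOnto F) - (1 - projOnto S) * projOnto F‖ := by rw [hdeco]
    _ ≤ ‖projOnto S * (1 - projOnto F)‖ + ‖(1 - projOnto S) * projOnto F‖ := norm_sub_le _ _
    _ ≤ ε + 2 * ε := add_le_add hAop' hBop
    _ = 3 * ε := by ring

lemma projOnto_lastCoords_apply {d k : ℕ} (x : EuclideanSpace ℝ (Fin d)) :
    projOnto (lastCoords d k) x = fun i : Fin d => if (i : ℕ) < k then 0 else x i := by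
  apply congrArg WithLp.ofLp (projOnto_eq_of _ x
    (WithLp.toLp 2 (fun i : Fin d => if (i : ℕ) < k then 0 else x i)) ?_ ?_)
  · intro i hi
    simp only []
    rw [if_pos hi]
  · intro w hw
    rw [PiLp.inner_apply]
    apply Finset.sum_eq_zero
    intro j _
    rcases lt_or_ge (j : ℕ) k with h | h
    · simp [hw j h]
    · simp [if_neg (not_lt.mpr h), RCLike.inner_apply]

lemma sub_projOnto_last {d k : ℕ} (x : EuclideanSpace ℝ (Fin d)) :
    x - projOnto (lastCoords d k) x = projOnto (firstCoords d k) x := by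
  ext i
  rw [PiLp.sub_apply, projOnto_lastCoords_apply, projOnto_firstCoords_apply]
  rcases lt_or_ge (i : ℕ) k with h | h
  · simp only [PiLp.sub_apply, if_pos h]; ring
  · simp only [PiLp.sub_apply, if_neg (not_lt.mpr h)]; ring

lemma diag_apply {d : ℕ} (a : Fin d → ℝ) (x : EuclideanSpace ℝ (Fin d)) (i : Fin d) :
    Matrix.toEuclideanLin (Matrix.diagonal a) x i = a i * x i := by
  simp [Matrix.toEuclideanLin_apply, Matrix.mulVec_diagonal]

lemma norm_proj_first_sq {d k : ℕ} (x : EuclideanSpace ℝ (Fin d)) :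
    ‖projOnto (firstCoords d k) x‖ ^ 2 = ∑ i : Fin d, (if (i : ℕ) < k then x i * x i else 0) := by
  rw [norm_sq_coords, projOnto_firstCoords_apply]
  congr 1; funext i
  rcases lt_or_ge (i : ℕ) k with h | h
  · simp [h]
  · simp [if_neg (not_lt.mpr h)]

lemma norm_sub_proj_first_sq {d k : ℕ} (x : EuclideanSpace ℝ (Fin d)) :
    ‖x - projOnto (firstCoords d k) x‖ ^ 2 = ∑ i : Fin d, (if (i : ℕ) < k then 0 else x i * x i) := by
  rw [norm_sq_coords]
  simp only [PiLp.sub_apply, projOnto_firstCoords_apply]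
  congr 1; funext i
  rcases lt_or_ge (i : ℕ) k with h | h
  · simp [h, PiLp.sub_apply]
  · simp [if_neg (not_lt.mpr h), PiLp.sub_apply]

lemma norm_first_split {d k : ℕ} (x : EuclideanSpace ℝ (Fin d)) :
    ‖x‖ ^ 2 = ‖projOnto (firstCoords d k) x‖ ^ 2
      + ‖x - projOnto (firstCoords d k) x‖ ^ 2 := by
  rw [norm_sq_coords, norm_proj_first_sq, norm_sub_proj_first_sq, ← Finset.sum_add_distrib]
  congr 1; funext i
  rcases lt_or_ge (i : ℕ) k with h | h
  · simp [h]
  · simp [if_neg (not_lt.mpr h)]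

lemma norm_proj_first_le {d k : ℕ} (x : EuclideanSpace ℝ (Fin d)) :
    ‖projOnto (firstCoords d k) x‖ ≤ ‖x‖ := by
  apply sq_le_of_le (norm_nonneg _) (norm_nonneg _)
  rw [norm_first_split (k := k) x]
  nlinarith [sq_nonneg ‖x - projOnto (firstCoords d k) x‖]

lemma norm_sub_proj_first_le {d k : ℕ} (x : EuclideanSpace ℝ (Fin d)) :
    ‖x - projOnto (firstCoords d k) x‖ ≤ ‖x‖ := by
  apply sq_le_of_le (norm_nonneg _) (norm_nonneg _)
  rw [norm_first_split (k := k) x]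
  nlinarith [sq_nonneg ‖projOnto (firstCoords d k) x‖]

lemma diag_estimate {d k : ℕ} (hk1 : 1 ≤ k) (hkd : k < d) (a : Fin d → ℝ)
    (hmono : ∀ i j : Fin d, i ≤ j → a j ≤ a i) (hpos : ∀ i, 0 < a i)
    {c : ℝ} (hc : 0 < c) (u : EuclideanSpace ℝ (Fin d))
    (hu : c * ‖u‖ ≤ ‖projOnto (firstCoords d k) u‖) :
    ‖Matrix.toEuclideanLin (Matrix.diagonal a) u
        - projOnto (firstCoords d k) (Matrix.toEuclideanLin (Matrix.diagonal a) u)‖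
      ≤ (a ⟨k, hkd⟩ / a ⟨k - 1, by omega⟩) * c⁻¹
        * ‖Matrix.toEuclideanLin (Matrix.diagonal a) u‖ := by
  set w := Matrix.toEuclideanLin (Matrix.diagonal a) u with hw
  set ak : ℝ := a ⟨k, hkd⟩ with hak
  set ak1 : ℝ := a ⟨k - 1, by omega⟩ with hak1
  have hakpos : 0 < ak := hpos _
  have hak1pos : 0 < ak1 := hpos _
  -- ‖w - P_f w‖ ≤ ak * ‖u - P_f u‖
  have h1 : ‖w - projOnto (firstCoords d k) w‖ ≤ ak * ‖u - projOnto (firstCoords d k) u‖ := by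
    apply sq_le_of_le (norm_nonneg _) (by positivity)
    rw [mul_pow, norm_sub_proj_first_sq, norm_sub_proj_first_sq, Finset.mul_sum]
    apply Finset.sum_le_sum
    intro i _
    rcases lt_or_ge (i : ℕ) k with h | h
    · simp [h]
    · rw [if_neg (not_lt.mpr h), if_neg (not_lt.mpr h), hw, diag_apply]
      have hle : a i ≤ ak := hmono ⟨k, hkd⟩ i (by simpa [Fin.le_def] using h)
      have hai : 0 < a i := hpos i
      have h1 : a i * u i * (a i * u i) = (a i)^2 * (u i * u i) := by ring
      have h2 : (a i)^2 ≤ ak^2 := by nlinarith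
      rw [h1]
      exact mul_le_mul_of_nonneg_right h2 (mul_self_nonneg (u i))
  -- ak1 * ‖P_f u‖ ≤ ‖P_f w‖
  have h2 : ak1 * ‖projOnto (firstCoords d k) u‖ ≤ ‖projOnto (firstCoords d k) w‖ := by
    apply sq_le_of_le (by positivity) (norm_nonneg _)
    rw [mul_pow, norm_proj_first_sq, norm_proj_first_sq, Finset.mul_sum]
    apply Finset.sum_le_sum
    intro i _
    rcases lt_or_ge (i : ℕ) k with h | h
    · rw [if_pos h, if_pos h, hw, diag_apply]
      have hle : ak1 ≤ a i := hmono i ⟨k - 1, by omega⟩ (by simp [Fin.le_def]; omega)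
      have hai : 0 < a i := hpos i
      have h1' : a i * u i * (a i * u i) = (a i)^2 * (u i * u i) := by ring
      have h2' : ak1^2 ≤ (a i)^2 := by nlinarith
      rw [h1']
      exact mul_le_mul_of_nonneg_right h2' (mul_self_nonneg (u i))
    · simp [if_neg (not_lt.mpr h)]
  have h3 : ‖projOnto (firstCoords d k) w‖ ≤ ‖w‖ := norm_proj_first_le w
  have h4 : ‖u - projOnto (firstCoords d k) u‖ ≤ ‖u‖ := norm_sub_proj_first_le u
  have h5 : ak1 * c * ‖u‖ ≤ ‖w‖ := by
    calc ak1 * c * ‖u‖ = ak1 * (c * ‖u‖) := by ring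
      _ ≤ ak1 * ‖projOnto (firstCoords d k) u‖ := by nlinarith
      _ ≤ ‖projOnto (firstCoords d k) w‖ := h2
      _ ≤ ‖w‖ := h3
  calc ‖w - projOnto (firstCoords d k) w‖ ≤ ak * ‖u - projOnto (firstCoords d k) u‖ := h1
    _ ≤ ak * ‖u‖ := by nlinarith
    _ = (ak / ak1) * c⁻¹ * (ak1 * c * ‖u‖) := by field_simp
    _ ≤ (ak / ak1) * c⁻¹ * ‖w‖ := by
        apply mul_le_mul_of_nonneg_left h5 (by positivity)

lemma exists_delta {d : ℕ} (V W₀ : Submodule ℝ (EuclideanSpace ℝ (Fin d)))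
    (hV : V ≠ ⊥) (htrans : V ⊓ W₀ = ⊥) :
    ∃ δ > 0, ∀ v ∈ V, δ * ‖v‖ ≤ ‖v - projOnto W₀ v‖ := by
  set f : EuclideanSpace ℝ (Fin d) → ℝ := fun v => ‖v - projOnto W₀ v‖ with hf
  have hfc : Continuous f := (continuous_id.sub (projOnto W₀).continuous).norm
  set Sp : Set (EuclideanSpace ℝ (Fin d)) := (V : Set (EuclideanSpace ℝ (Fin d))) ∩
    Metric.sphere 0 1 with hSp
  have hcpt : IsCompact Sp :=
    Metric.isCompact_of_isClosed_isBounded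
      (V.closed_of_finiteDimensional.inter Metric.isClosed_sphere)
      ((Metric.isBounded_sphere).subset Set.inter_subset_right)
  have hne : Sp.Nonempty := by
    obtain ⟨v, hv, hv0⟩ := Submodule.exists_mem_ne_zero_of_ne_bot hV
    refine ⟨‖v‖⁻¹ • v, ⟨V.smul_mem _ hv, ?_⟩⟩
    rw [mem_sphere_zero_iff_norm]
    exact norm_smul_inv_norm hv0
  obtain ⟨v₀, hv₀, hmin⟩ := hcpt.exists_isMinOn hne hfc.continuousOn
  have hv₀V : v₀ ∈ V := hv₀.1
  have hv₀n : ‖v₀‖ = 1 := mem_sphere_zero_iff_norm.mp hv₀.2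
  have hδpos : 0 < f v₀ := by
    rcases lt_or_eq_of_le (norm_nonneg (v₀ - projOnto W₀ v₀)) with h | h
    · exact h
    · exfalso
      have h0 : v₀ - projOnto W₀ v₀ = 0 := by
        have := h.symm; rwa [norm_eq_zero] at this
      have hv₀W : v₀ ∈ W₀ := by
        have : v₀ = projOnto W₀ v₀ := by
          have := sub_eq_zero.mp h0; exact this
        rw [this]; exact projOnto_apply_mem W₀ v₀
      have : v₀ ∈ V ⊓ W₀ := ⟨hv₀V, hv₀W⟩
      rw [htrans] at this
      simp only [Submodule.mem_bot] at this
      rw [this] at hv₀n; simp at hv₀n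
  refine ⟨f v₀, hδpos, ?_⟩
  intro v hv
  rcases eq_or_ne v 0 with rfl | hv0
  · simp
  · set u := ‖v‖⁻¹ • v with hu
    have huSp : u ∈ Sp := by
      refine ⟨V.smul_mem _ hv, ?_⟩
      rw [mem_sphere_zero_iff_norm]
      exact norm_smul_inv_norm hv0
    have h1 : f v₀ ≤ f u := hmin huSp
    have hvn : 0 < ‖v‖ := norm_pos_iff.mpr hv0
    have h2 : f u = ‖v‖⁻¹ * f v := by
      rw [hf]
      simp only [hu, map_smul]
      rw [← smul_sub, norm_smul]
      simp only [norm_inv, norm_norm]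
    calc f v₀ * ‖v‖ ≤ f u * ‖v‖ := by nlinarith
      _ = f v := by rw [h2]; field_simp

def toEucLin_equiv {d : ℕ} (M N : Matrix (Fin d) (Fin d) ℝ) (h1 : M * N = 1) :
    EuclideanSpace ℝ (Fin d) ≃ₗ[ℝ] EuclideanSpace ℝ (Fin d) :=
  LinearEquiv.ofLinear (Matrix.toEuclideanLin M) (Matrix.toEuclideanLin N)
    (by rw [← toEucLin_mul, h1]; ext x; simp [Matrix.toEuclideanLin_apply])
    (by rw [← toEucLin_mul, mul_eq_one_comm.mp h1]; ext x
        simp [Matrix.toEuclideanLin_apply])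

lemma finrank_map_matrix {d : ℕ} (M N : Matrix (Fin d) (Fin d) ℝ) (h1 : M * N = 1)
    (V : Submodule ℝ (EuclideanSpace ℝ (Fin d))) :
    Module.finrank ℝ (V.map (Matrix.toEuclideanLin M)) = Module.finrank ℝ V := by
  have heq : (↑(toEucLin_equiv M N h1) :
      EuclideanSpace ℝ (Fin d) →ₗ[ℝ] EuclideanSpace ℝ (Fin d))
      = Matrix.toEuclideanLin M := rfl
  rw [← heq, LinearEquiv.finrank_map_eq]

lemma finrank_firstCoords {d k : ℕ} (hkd : k ≤ d) :
    Module.finrank ℝ (firstCoords d k) = k := by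
  let f : firstCoords d k →ₗ[ℝ] (Fin k → ℝ) :=
    { toFun := fun x j => x.1 ⟨(j : ℕ), lt_of_lt_of_le j.2 hkd⟩
      map_add' := by intro x y; funext j; simp [PiLp.add_apply]
      map_smul' := by intro c x; funext j; simp [PiLp.smul_apply] }
  have hfbij : Function.Bijective f := by
    constructor
    · rw [← LinearMap.ker_eq_bot, LinearMap.ker_eq_bot']
      intro x hx0
      apply Subtype.ext
      ext i
      rcases lt_or_ge (i : ℕ) k with h | h
      · have := congrFun hx0 ⟨(i : ℕ), h⟩
        simpa [f] using this
      · exact x.2 i h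
    · intro y
      refine ⟨⟨WithLp.toLp 2 (fun i => if h : (i : ℕ) < k then y ⟨(i : ℕ), h⟩ else 0), ?_⟩, ?_⟩
      · intro i hi
        simp [dif_neg (not_lt.mpr hi)]
      · funext j
        simp [f]
  have := LinearEquiv.finrank_eq (LinearEquiv.ofBijective f hfbij)
  rw [this, Module.finrank_fin_fun]

lemma map_mIso {d : ℕ} (M : Matrix (Fin d) (Fin d) ℝ) (h : M * Mᵀ = 1)
    (S : Submodule ℝ (EuclideanSpace ℝ (Fin d))) :
    S.map (Matrix.toEuclideanLin M)
      = S.map (((mIso M h).toLinearEquiv :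
          EuclideanSpace ℝ (Fin d) →ₗ[ℝ] EuclideanSpace ℝ (Fin d))) := rfl

lemma map_mIso_symm {d : ℕ} (M : Matrix (Fin d) (Fin d) ℝ) (h : M * Mᵀ = 1)
    (S : Submodule ℝ (EuclideanSpace ℝ (Fin d))) :
    S.map (Matrix.toEuclideanLin Mᵀ)
      = S.map (((mIso M h).symm.toLinearEquiv :
          EuclideanSpace ℝ (Fin d) →ₗ[ℝ] EuclideanSpace ℝ (Fin d))) := rfl

lemma transport {d k : ℕ} (L : Matrix (Fin d) (Fin d) ℝ) (hL : L * Lᵀ = 1)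
    (V W₀ : Submodule ℝ (EuclideanSpace ℝ (Fin d))) {δ : ℝ}
    (hδ : ∀ v ∈ V, δ * ‖v‖ ≤ ‖v - projOnto W₀ v‖) :
    ∀ u ∈ V.map (Matrix.toEuclideanLin L),
      (δ - ‖projOnto ((lastCoords d k).map (Matrix.toEuclideanLin Lᵀ)) - projOnto W₀‖) * ‖u‖
        ≤ ‖projOnto (firstCoords d k) u‖ := by
  set Q := mIso L hL with hQ
  set q := ‖projOnto ((lastCoords d k).map (Matrix.toEuclideanLin Lᵀ)) - projOnto W₀‖ with hq
  rintro _ ⟨v, hv, rfl⟩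
  set u := Matrix.toEuclideanLin L v with hu
  have huQ : u = Q v := rfl
  have hun : ‖u‖ = ‖v‖ := by rw [huQ, Q.norm_map]
  -- orthogonal projection onto W n
  have hproj : projOnto ((lastCoords d k).map (Matrix.toEuclideanLin Lᵀ)) v
      = Q.symm (projOnto (lastCoords d k) (Q v)) := by
    rw [map_mIso_symm L hL, projOnto_map_iso Q.symm (lastCoords d k)]
    simp only [ContinuousLinearMap.coe_comp', Function.comp_apply,
      LinearIsometry.coe_toContinuousLinearMap, LinearIsometryEquiv.coe_toLinearIsometry,
      LinearIsometryEquiv.symm_symm]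
  have hkey : ‖v - projOnto ((lastCoords d k).map (Matrix.toEuclideanLin Lᵀ)) v‖
      = ‖projOnto (firstCoords d k) u‖ := by
    rw [hproj]
    have : v = Q.symm (Q v) := by simp
    calc ‖v - Q.symm (projOnto (lastCoords d k) (Q v))‖
        = ‖Q.symm (Q v) - Q.symm (projOnto (lastCoords d k) (Q v))‖ := by rw [← this]
      _ = ‖Q.symm (Q v - projOnto (lastCoords d k) (Q v))‖ := by rw [map_sub]
      _ = ‖Q v - projOnto (lastCoords d k) (Q v)‖ := Q.symm.norm_map _
      _ = ‖projOnto (firstCoords d k) (Q v)‖ := by rw [sub_projOnto_last]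
      _ = ‖projOnto (firstCoords d k) u‖ := by rw [← huQ]
  have h1 : δ * ‖v‖ ≤ ‖v - projOnto W₀ v‖ := hδ v hv
  have h2 : ‖v - projOnto W₀ v‖
      ≤ ‖v - projOnto ((lastCoords d k).map (Matrix.toEuclideanLin Lᵀ)) v‖ + q * ‖v‖ := by
    have htri : ‖v - projOnto W₀ v‖
        ≤ ‖v - projOnto ((lastCoords d k).map (Matrix.toEuclideanLin Lᵀ)) v‖
          + ‖projOnto ((lastCoords d k).map (Matrix.toEuclideanLin Lᵀ)) v - projOnto W₀ v‖ := by
      have : v - projOnto W₀ v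
          = (v - projOnto ((lastCoords d k).map (Matrix.toEuclideanLin Lᵀ)) v)
            + (projOnto ((lastCoords d k).map (Matrix.toEuclideanLin Lᵀ)) v
              - projOnto W₀ v) := by abel
      rw [this]; exact norm_add_le _ _
    have hop : ‖projOnto ((lastCoords d k).map (Matrix.toEuclideanLin Lᵀ)) v
        - projOnto W₀ v‖ ≤ q * ‖v‖ := by
      have := (projOnto ((lastCoords d k).map (Matrix.toEuclideanLin Lᵀ))
        - projOnto W₀).le_opNorm v
      rw [ContinuousLinearMap.sub_apply] at this
      exact this
    linarith
  rw [hun]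
  calc (δ - q) * ‖v‖ = δ * ‖v‖ - q * ‖v‖ := by ring
    _ ≤ ‖projOnto (firstCoords d k) u‖ := by
        rw [← hkey]; linarith

/-- If `{g_n} ⊂ SL(d,ℝ)` has singular value decompositions `g_n = K_n A_n L_n` with
`σ_k(g_n)/σ_{k+1}(g_n) → ∞`, `U_k(g_n) = K_n(span(e₁,…,e_k)) → V₀` and
`U_{d−k}(g_n⁻¹) = L_nᵀ(span(e_{k+1},…,e_d)) → W₀` in the Grassmannians, then
`g_n(V) → V₀` for every `k`-plane `V` transverse to `W₀`. -/
theorem grassmannian_convergence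
    (d k : ℕ) (hk1 : 1 ≤ k) (hkd : k < d)
    (g : ℕ → Matrix.SpecialLinearGroup (Fin d) ℝ)
    (K L : ℕ → Matrix (Fin d) (Fin d) ℝ) (A : ℕ → Fin d → ℝ)
    (hK : ∀ n, K n * (K n)ᵀ = 1) (hL : ∀ n, L n * (L n)ᵀ = 1)
    (hAmono : ∀ n, ∀ i j : Fin d, i ≤ j → A n j ≤ A n i)
    (hApos : ∀ n, ∀ i : Fin d, 0 < A n i)
    (hSVD : ∀ n, (g n : Matrix (Fin d) (Fin d) ℝ) = K n * Matrix.diagonal (A n) * L n)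
    (V₀ W₀ : Submodule ℝ (EuclideanSpace ℝ (Fin d)))
    (hV₀ : Module.finrank ℝ V₀ = k) (hW₀ : Module.finrank ℝ W₀ = d - k)
    (hgap : Filter.Tendsto
      (fun n => A n ⟨k - 1, by omega⟩ / A n ⟨k, hkd⟩) Filter.atTop Filter.atTop)
    (hU : Filter.Tendsto
      (fun n => projOnto ((firstCoords d k).map (Matrix.toEuclideanLin (K n))))
      Filter.atTop (𝓝 (projOnto V₀)))
    (hW : Filter.Tendsto
      (fun n => projOnto ((lastCoords d k).map (Matrix.toEuclideanLin (L n)ᵀ)))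
      Filter.atTop (𝓝 (projOnto W₀))) :
    ∀ V : Submodule ℝ (EuclideanSpace ℝ (Fin d)),
      Module.finrank ℝ V = k → V ⊓ W₀ = ⊥ →
      Filter.Tendsto
        (fun n => projOnto (V.map (Matrix.toEuclideanLin (g n : Matrix (Fin d) (Fin d) ℝ))))
        Filter.atTop (𝓝 (projOnto V₀)) := by
  intro V hVk htrans
  have hVne : V ≠ ⊥ := by
    intro h
    rw [h, finrank_bot] at hVk
    omega
  obtain ⟨δ, hδpos, hδ⟩ := exists_delta V W₀ hVne htrans
  -- the singular value ratio
  set r : ℕ → ℝ := fun n => (A n ⟨k, hkd⟩ / A n ⟨k - 1, by omega⟩) * (δ / 2)⁻¹ with hrdef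
  have hrnonneg : ∀ n, 0 ≤ r n := by
    intro n
    have h1 := hApos n ⟨k, hkd⟩
    have h2 := hApos n ⟨k - 1, by omega⟩
    positivity
  have hrt : Filter.Tendsto r Filter.atTop (𝓝 0) := by
    have h1 : Filter.Tendsto (fun n => A n ⟨k, hkd⟩ / A n ⟨k - 1, by omega⟩)
        Filter.atTop (𝓝 0) := by
      have h2 := hgap.inv_tendsto_atTop
      have h3 : (fun n => A n ⟨k - 1, by omega⟩ / A n ⟨k, hkd⟩)⁻¹
          = fun n => A n ⟨k, hkd⟩ / A n ⟨k - 1, by omega⟩ := by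
        funext n
        simp [Pi.inv_apply, inv_div]
      rwa [h3] at h2
    rw [hrdef]
    simpa using h1.mul_const (δ / 2)⁻¹
  -- the distance between the approximating planes and W₀
  set q : ℕ → ℝ := fun n =>
    ‖projOnto ((lastCoords d k).map (Matrix.toEuclideanLin (L n)ᵀ)) - projOnto W₀‖ with hqdef
  have hqt : Filter.Tendsto q Filter.atTop (𝓝 0) :=
    tendsto_iff_norm_sub_tendsto_zero.mp hW
  have hev : ∀ᶠ n in Filter.atTop, q n ≤ δ / 2 ∧ r n ≤ 1 / 2 := by
    filter_upwards [hqt.eventually_le_const (show (0:ℝ) < δ / 2 by linarith),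
      hrt.eventually_le_const (show (0:ℝ) < 1 / 2 by norm_num)] with n h1 h2
    exact ⟨h1, h2⟩
  -- key quantitative estimate
  have key : ∀ n, q n ≤ δ / 2 → r n ≤ 1 / 2 →
      ‖projOnto (V.map (Matrix.toEuclideanLin (g n : Matrix (Fin d) (Fin d) ℝ)))
        - projOnto ((firstCoords d k).map (Matrix.toEuclideanLin (K n)))‖ ≤ 3 * r n := by
    intro n hqn hrn
    have htv : ∀ u ∈ V.map (Matrix.toEuclideanLin (L n)),
        (δ / 2) * ‖u‖ ≤ ‖projOnto (firstCoords d k) u‖ := by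
      intro u hu
      have h1 := transport (k := k) (L n) (hL n) V W₀ hδ u hu
      have h2 : (δ / 2) * ‖u‖ ≤ (δ - q n) * ‖u‖ := by
        have := norm_nonneg u
        nlinarith
      exact h2.trans h1
    set Tn := (V.map (Matrix.toEuclideanLin (L n))).map
        (Matrix.toEuclideanLin (Matrix.diagonal (A n))) with hTndef
    have hTest : ∀ w ∈ Tn, ‖w - projOnto (firstCoords d k) w‖ ≤ r n * ‖w‖ := by
      rintro w ⟨u, hu, rfl⟩
      exact diag_estimate hk1 hkd (A n) (hAmono n) (hApos n)
        (show (0:ℝ) < δ / 2 by linarith) u (htv u hu)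
    have hdinv : Matrix.diagonal (A n) * Matrix.diagonal (fun i => (A n i)⁻¹) = 1 := by
      rw [Matrix.diagonal_mul_diagonal]
      have hone : ∀ i : Fin d, A n i * (A n i)⁻¹ = 1 :=
        fun i => mul_inv_cancel₀ (hApos n i).ne'
      ext i j
      rcases eq_or_ne i j with rfl | hij
      · simp [Matrix.diagonal_apply_eq, hone]
      · simp [Matrix.diagonal_apply_ne _ hij, Matrix.one_apply_ne hij]
    have hdim : Module.finrank ℝ Tn = Module.finrank ℝ (firstCoords d k) := by
      rw [finrank_firstCoords (le_of_lt hkd), hTndef, finrank_map_matrix _ _ hdinv,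
        finrank_map_matrix _ _ (hL n), hVk]
    have hgap3 : ‖projOnto Tn - projOnto (firstCoords d k)‖ ≤ 3 * r n :=
      gap_lemma (firstCoords d k) Tn hdim (hrnonneg n) hrn hTest
    have hdecomp : V.map (Matrix.toEuclideanLin (g n : Matrix (Fin d) (Fin d) ℝ))
        = Tn.map (Matrix.toEuclideanLin (K n)) := by
      rw [hSVD n, toEucLin_mul, toEucLin_mul, Submodule.map_comp, Submodule.map_comp, hTndef]
    rw [hdecomp, map_mIso (K n) (hK n) Tn, map_mIso (K n) (hK n) (firstCoords d k),
      projOnto_map_iso (mIso (K n) (hK n)) Tn,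
      projOnto_map_iso (mIso (K n) (hK n)) (firstCoords d k),
      ← ContinuousLinearMap.comp_sub, ← ContinuousLinearMap.sub_comp, norm_conj]
    exact hgap3
  -- conclusion
  have hU0 : Filter.Tendsto (fun n =>
      ‖projOnto ((firstCoords d k).map (Matrix.toEuclideanLin (K n))) - projOnto V₀‖)
      Filter.atTop (𝓝 0) := tendsto_iff_norm_sub_tendsto_zero.mp hU
  rw [tendsto_iff_norm_sub_tendsto_zero]
  apply squeeze_zero' (Filter.Eventually.of_forall fun n => norm_nonneg _)
    (g := fun n => 3 * r n
      + ‖projOnto ((firstCoords d k).map (Matrix.toEuclideanLin (K n))) - projOnto V₀‖)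
  · filter_upwards [hev] with n hn
    have h1 := key n hn.1 hn.2
    have htri : ‖projOnto (V.map (Matrix.toEuclideanLin (g n : Matrix (Fin d) (Fin d) ℝ)))
        - projOnto V₀‖
        ≤ ‖projOnto (V.map (Matrix.toEuclideanLin (g n : Matrix (Fin d) (Fin d) ℝ)))
            - projOnto ((firstCoords d k).map (Matrix.toEuclideanLin (K n)))‖
          + ‖projOnto ((firstCoords d k).map (Matrix.toEuclideanLin (K n)))
            - projOnto V₀‖ := by
      have heq : projOnto (V.map (Matrix.toEuclideanLin (g n : Matrix (Fin d) (Fin d) ℝ)))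
          - projOnto V₀
          = (projOnto (V.map (Matrix.toEuclideanLin (g n : Matrix (Fin d) (Fin d) ℝ)))
            - projOnto ((firstCoords d k).map (Matrix.toEuclideanLin (K n))))
            + (projOnto ((firstCoords d k).map (Matrix.toEuclideanLin (K n)))
              - projOnto V₀) := by abel
      rw [heq]
      exact norm_add_le _ _
    have := add_le_add_right h1
      ‖projOnto ((firstCoords d k).map (Matrix.toEuclideanLin (K n))) - projOnto V₀‖
    linarith
  · have := (hrt.const_mul (3:ℝ)).add hU0
    simpa only [mul_zero, add_zero] using this


end
end

section
/- Let g ∈ SL(d, ℝ) be weakly unipotent, and suppose there are complete flags F₁, F₂ in ℝ^d such that g fixes F₁ and the quadruple of flags (F₁, g⁻¹(F₂), F₂, g(F₂)) is positive. Then g = ±u for a unipotent u ∈ SL(d, ℝ) with a single Jordan block; equivalently, F₁ is the unique complete flag fixed by g. -/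
noncomputable section

/-- A complete flag in `ℝ^d`: a nested family of subspaces with `dim F i = i` for
`i ≤ d`. -/
def IsCompleteFlag (d : ℕ) (F : ℕ → Submodule ℝ (Fin d → ℝ)) : Prop :=
  Monotone F ∧ ∀ i, i ≤ d → Module.finrank ℝ (F i) = i

/-- The image flag `g(F)` of a flag `F` under a matrix `g`. -/
def mapFlag {d : ℕ} (g : Matrix (Fin d) (Fin d) ℝ) (F : ℕ → Submodule ℝ (Fin d → ℝ)) :
    ℕ → Submodule ℝ (Fin d → ℝ) :=
  fun i => (F i).map (Matrix.toLin' g)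

/-- The matrix of (the linear map induced by) `w` with respect to the ordered basis `B`. -/
def matrixWrt {d : ℕ} (B : Module.Basis (Fin d) ℝ (Fin d → ℝ)) (w : Matrix (Fin d) (Fin d) ℝ) :
    Matrix (Fin d) (Fin d) ℝ :=
  LinearMap.toMatrix B B (Matrix.toLin' w)

/-- Membership in `U_{>0}(B)`: `w` is unipotent and its matrix with respect to the ordered
basis `B` is totally positive upper triangular. -/
def MemUPos {d : ℕ} (B : Module.Basis (Fin d) ℝ (Fin d → ℝ)) (w : Matrix (Fin d) (Fin d) ℝ) : Prop :=
  IsNilpotent (w - 1) ∧ IsTotallyPositiveUpper (matrixWrt B w)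

/-- Positivity of a quadruple of flags `(F₁, F₂, F₃, F₄)` (Fock–Goncharov). -/
def PositiveQuadruple (d : ℕ) (F₁ F₂ F₃ F₄ : ℕ → Submodule ℝ (Fin d → ℝ)) : Prop :=
  ∃ (B : Module.Basis (Fin d) ℝ (Fin d → ℝ)) (u₂ u₃ : Matrix (Fin d) (Fin d) ℝ),
    (∀ i : Fin d, B i ∈ F₁ ((i : ℕ) + 1) ⊓ F₄ (d - (i : ℕ))) ∧
    MemUPos B u₂ ∧ MemUPos B u₃ ∧
    mapFlag (u₃ * u₂) F₄ = F₂ ∧ mapFlag u₃ F₄ = F₃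

/-- `g` is weakly unipotent: its multiplicative Jordan–Chevalley decomposition `g = s·u`
has elliptic semisimple part `s` (diagonalizable over `ℂ` with all eigenvalues of modulus
one) and unipotent part `u`. -/
def IsWeaklyUnipotent {d : ℕ} (g : Matrix (Fin d) (Fin d) ℝ) : Prop :=
  ∃ s u : Matrix (Fin d) (Fin d) ℝ, g = s * u ∧ s * u = u * s ∧ IsNilpotent (u - 1) ∧
    ∃ (P : Matrix (Fin d) (Fin d) ℂ) (D : Fin d → ℂ),
      IsUnit P.det ∧ s.map (fun x : ℝ => (x : ℂ)) = P * Matrix.diagonal D * P⁻¹ ∧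
      ∀ i, ‖D i‖ = 1

section Aux

variable {d : ℕ}

/- ### `matrixWrt` as an algebra equivalence -/

private def mwE (B : Module.Basis (Fin d) ℝ (Fin d → ℝ)) :
    Matrix (Fin d) (Fin d) ℝ ≃ₐ[ℝ] Matrix (Fin d) (Fin d) ℝ :=
  (Matrix.toLinAlgEquiv' : Matrix (Fin d) (Fin d) ℝ ≃ₐ[ℝ] _).trans (LinearMap.toMatrixAlgEquiv B)

variable (B : Module.Basis (Fin d) ℝ (Fin d → ℝ))

private lemma matrixWrt_eq (w) : matrixWrt B w = mwE B w := rfl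

private lemma matrixWrt_mul (a b) : matrixWrt B (a * b) = matrixWrt B a * matrixWrt B b := by
  simp [matrixWrt_eq, _root_.map_mul]

private lemma matrixWrt_one : matrixWrt B 1 = 1 := by simp [matrixWrt_eq]

private lemma matrixWrt_zero : matrixWrt B 0 = 0 := by simp [matrixWrt_eq]

private lemma matrixWrt_sub (a b) : matrixWrt B (a - b) = matrixWrt B a - matrixWrt B b := by
  simp [matrixWrt_eq, _root_.map_sub]

private lemma matrixWrt_smul (c : ℝ) (a) : matrixWrt B (c • a) = c • matrixWrt B a := by
  simp [matrixWrt_eq, _root_.map_smul]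

private lemma matrixWrt_pow (a) (k : ℕ) : matrixWrt B (a ^ k) = matrixWrt B a ^ k := by
  simp [matrixWrt_eq, _root_.map_pow]

private lemma matrixWrt_inj : Function.Injective (matrixWrt B) := by
  intro a b h
  simpa [matrixWrt_eq] using (mwE B).injective h

private lemma matrixWrt_det (w) : (matrixWrt B w).det = w.det := by
  rw [matrixWrt, LinearMap.det_toMatrix, LinearMap.det_toLin']

private lemma matrixWrt_apply (w) (i j) : matrixWrt B w i j = B.repr (Matrix.toLin' w (B j)) i :=
  LinearMap.toMatrix_apply _ _ _ _ _

/- ### `mapFlag` -/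

private lemma mapFlag_mapFlag (a b : Matrix (Fin d) (Fin d) ℝ) (F) :
    mapFlag a (mapFlag b F) = mapFlag (a * b) F := by
  funext i
  simp [mapFlag, Matrix.toLin'_mul, Submodule.map_comp]

private lemma mapFlag_one (F : ℕ → Submodule ℝ (Fin d → ℝ)) : mapFlag 1 F = F := by
  funext i
  simp [mapFlag, Matrix.toLin'_one, Submodule.map_id]

/- ### spans adapted to a flag -/

private lemma repr_eq_zero_of_mem_span {s : Set (Fin d)} {x : Fin d → ℝ}
    (hx : x ∈ Submodule.span ℝ (B '' s)) {i : Fin d} (hi : i ∉ s) : B.repr x i = 0 := by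
  have := B.mem_span_image.1 hx
  by_contra h
  exact hi (this (Finsupp.mem_support_iff.2 h))

private lemma span_eq_of_basis {W : Submodule ℝ (Fin d → ℝ)} {i : ℕ}
    (e : Fin i → Fin d) (he : Function.Injective e) (hmem : ∀ k, B (e k) ∈ W)
    (hr : Module.finrank ℝ W = i) :
    W = Submodule.span ℝ (B '' (Set.range e)) := by
  rw [← Set.range_comp]
  have hli : LinearIndependent ℝ (B ∘ e) := B.linearIndependent.comp e he
  refine (Submodule.eq_of_le_of_finrank_eq ?_ ?_).symm
  · rw [Submodule.span_le]
    rintro x ⟨k, rfl⟩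
    exact hmem k
  · rw [finrank_span_eq_card hli, hr, Fintype.card_fin]

private lemma flag_span_lt {F : ℕ → Submodule ℝ (Fin d → ℝ)}
    (hmono : Monotone F) (hrank : ∀ i, i ≤ d → Module.finrank ℝ (F i) = i)
    (hB : ∀ j : Fin d, B j ∈ F ((j : ℕ) + 1)) {i : ℕ} (hi : i ≤ d) :
    F i = Submodule.span ℝ (B '' {m : Fin d | (m : ℕ) < i}) := by
  have he : Function.Injective (fun k : Fin i => Fin.castLE hi k) := by
    intro a b hab
    exact Fin.ext (by simpa using congrArg Fin.val hab)
  have hrange : Set.range (fun k : Fin i => Fin.castLE hi k) = {m : Fin d | (m : ℕ) < i} := by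
    ext m
    constructor
    · rintro ⟨k, rfl⟩
      exact k.2
    · intro hm
      exact ⟨⟨(m : ℕ), hm⟩, Fin.ext rfl⟩
  rw [← hrange]
  refine span_eq_of_basis B _ he ?_ (hrank i hi)
  intro k
  refine hmono ?_ (hB (Fin.castLE hi k))
  show ((Fin.castLE hi k : Fin d) : ℕ) + 1 ≤ i
  have := k.2
  simp only [Fin.coe_castLE]
  omega

private lemma flag_span_ge {F : ℕ → Submodule ℝ (Fin d → ℝ)}
    (hmono : Monotone F) (hrank : ∀ i, i ≤ d → Module.finrank ℝ (F i) = i)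
    (hB : ∀ j : Fin d, B j ∈ F (d - (j : ℕ))) {i : ℕ} (hi : i ≤ d) :
    F i = Submodule.span ℝ (B '' {m : Fin d | d - i ≤ (m : ℕ)}) := by
  have he : Function.Injective (fun k : Fin i => (⟨d - i + (k : ℕ), by omega⟩ : Fin d)) := by
    intro a b hab
    have := congrArg Fin.val hab
    simp only at this
    exact Fin.ext (by omega)
  have hrange : Set.range (fun k : Fin i => (⟨d - i + (k : ℕ), by omega⟩ : Fin d))
      = {m : Fin d | d - i ≤ (m : ℕ)} := by
    ext m
    constructor
    · rintro ⟨k, rfl⟩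
      simp only [Set.mem_setOf_eq]
      omega
    · intro hm
      simp only [Set.mem_setOf_eq] at hm
      refine ⟨⟨(m : ℕ) - (d - i), by omega⟩, Fin.ext ?_⟩
      simp only
      omega
  rw [← hrange]
  refine span_eq_of_basis B _ he ?_ (hrank i hi)
  intro k
  refine hmono ?_ (hB ⟨d - i + (k : ℕ), by omega⟩)
  show d - (d - i + (k : ℕ)) ≤ i
  omega

private lemma mw_entry_zero (w : Matrix (Fin d) (Fin d) ℝ) (s : Fin d → Set (Fin d))
    (h : ∀ j, Matrix.toLin' w (B j) ∈ Submodule.span ℝ (B '' s j))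
    {i j : Fin d} (hij : i ∉ s j) : matrixWrt B w i j = 0 := by
  rw [matrixWrt_apply]
  exact repr_eq_zero_of_mem_span B (h j) hij

/- ### positivity of minors: entries -/

private lemma tp_entry_pos {M : Matrix (Fin d) (Fin d) ℝ}
    (h : ∀ (k : ℕ) (I J : Fin k → Fin d), StrictMono I → StrictMono J → (∀ l, I l ≤ J l) →
      0 < (M.submatrix I J).det)
    {i j : Fin d} (hij : i ≤ j) : 0 < M i j := by
  have := h 1 (fun _ => i) (fun _ => j)
    (fun a b hab => absurd (Subsingleton.elim a b ▸ hab) (lt_irrefl _))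
    (fun a b hab => absurd (Subsingleton.elim a b ▸ hab) (lt_irrefl _))
    (fun _ => hij)
  rwa [Matrix.det_fin_one, Matrix.submatrix_apply] at this

/- ### entries of products with (almost) diagonal matrices -/

private lemma diagL_mul_entry {L C : Matrix (Fin d) (Fin d) ℝ}
    (hL : ∀ i j, i ≠ j → L i j = 0) (i j : Fin d) :
    (L * C) i j = L i i * C i j := by
  rw [Matrix.mul_apply]
  rw [Finset.sum_eq_single i]
  · intro b _ hb
    rw [hL i b (Ne.symm hb), zero_mul]
  · intro h; exact absurd (Finset.mem_univ i) h

private lemma mul_diagR_entry {C K : Matrix (Fin d) (Fin d) ℝ}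
    (hK : ∀ i j, i ≠ j → K i j = 0) (i j : Fin d) :
    (C * K) i j = C i j * K j j := by
  rw [Matrix.mul_apply]
  rw [Finset.sum_eq_single j]
  · intro b _ hb
    rw [hK b j hb, mul_zero]
  · intro h; exact absurd (Finset.mem_univ j) h

private lemma upper_mul_diag_entry {A C : Matrix (Fin d) (Fin d) ℝ}
    (hA : A.BlockTriangular id) (hC : C.BlockTriangular id) (i : Fin d) :
    (A * C) i i = A i i * C i i := by
  rw [Matrix.mul_apply]
  rw [Finset.sum_eq_single i]
  · intro b _ hb
    rcases lt_or_gt_of_ne hb with h | h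
    · rw [hA (show (id : Fin d → Fin d) b < id i from h), zero_mul]
    · rw [hC (show (id : Fin d → Fin d) i < id b from h), mul_zero]
  · intro h; exact absurd (Finset.mem_univ i) h

/- ### strictly upper triangular matrices -/

private lemma pow_entry_zero (N : Matrix (Fin d) (Fin d) ℝ)
    (hN : ∀ i j : Fin d, (j : ℕ) ≤ i → N i j = 0) :
    ∀ (k : ℕ) (i j : Fin d), (j : ℕ) < (i : ℕ) + k → (N ^ k) i j = 0 := by
  intro k
  induction k with
  | zero =>
    intro i j hij
    simp only [pow_zero, Matrix.one_apply]
    rw [if_neg]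
    rintro rfl; omega
  | succ k IH =>
    intro i j hij
    rw [pow_succ']
    rw [Matrix.mul_apply]
    apply Finset.sum_eq_zero
    intro m _
    by_cases hm : (m : ℕ) ≤ (i : ℕ)
    · rw [hN i m hm, zero_mul]
    · rw [IH m j (by omega), mul_zero]

private lemma pow_entry_ne_zero (N : Matrix (Fin d) (Fin d) ℝ)
    (hN : ∀ i j : Fin d, (j : ℕ) ≤ i → N i j = 0)
    (hsd : ∀ i j : Fin d, (j : ℕ) = (i : ℕ) + 1 → N i j ≠ 0) :
    ∀ (k : ℕ) (i j : Fin d), (j : ℕ) = (i : ℕ) + k → (N ^ k) i j ≠ 0 := by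
  intro k
  induction k with
  | zero =>
    intro i j hij
    have : i = j := Fin.ext (by omega)
    subst this
    simp
  | succ k IH =>
    intro i j hij
    have hi1 : (i : ℕ) + 1 < d := by omega
    set c : Fin d := ⟨(i : ℕ) + 1, hi1⟩ with hc
    rw [pow_succ', Matrix.mul_apply]
    rw [Finset.sum_eq_single c]
    · exact mul_ne_zero (hsd i c rfl) (IH c j (by simp [hc]; omega))
    · intro m _ hm
      by_cases h1 : (m : ℕ) ≤ (i : ℕ)
      · rw [hN i m h1, zero_mul]
      · have : (j : ℕ) < (m : ℕ) + k := by
          have : (m : ℕ) ≠ (i : ℕ) + 1 := fun h => hm (Fin.ext (by simpa [hc] using h))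
          omega
        rw [pow_entry_zero N hN k m j this, mul_zero]
    · intro h; exact absurd (Finset.mem_univ c) h

private lemma pow_d_eq_zero (N : Matrix (Fin d) (Fin d) ℝ)
    (hN : ∀ i j : Fin d, (j : ℕ) ≤ i → N i j = 0) : N ^ d = 0 := by
  ext i j
  rw [pow_entry_zero N hN d i j (by omega), Matrix.zero_apply]

private lemma pow_mulVec_eq_zero_iff (N : Matrix (Fin d) (Fin d) ℝ)
    (hN : ∀ i j : Fin d, (j : ℕ) ≤ i → N i j = 0)
    (hsd : ∀ i j : Fin d, (j : ℕ) = (i : ℕ) + 1 → N i j ≠ 0)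
    (k : ℕ) (y : Fin d → ℝ) :
    (N ^ k).mulVec y = 0 ↔ ∀ m : Fin d, k ≤ (m : ℕ) → y m = 0 := by
  constructor
  · intro h m hm
    have main : ∀ (n : ℕ) (m : Fin d), d - (m : ℕ) ≤ n → k ≤ (m : ℕ) → y m = 0 := by
      intro n
      induction n with
      | zero => intro m hn _; omega
      | succ n IH =>
        intro m hn hkm
        have hjlt : (m : ℕ) - k < d := by omega
        set j : Fin d := ⟨(m : ℕ) - k, hjlt⟩ with hj
        have hrow : ((N ^ k).mulVec y) j = 0 := by rw [h]; rfl
        rw [Matrix.mulVec, dotProduct] at hrow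
        rw [Finset.sum_eq_single m] at hrow
        · have hcoef : (N ^ k) j m ≠ 0 := pow_entry_ne_zero N hN hsd k j m (by simp [hj]; omega)
          exact (mul_eq_zero.1 hrow).resolve_left hcoef
        · intro b _ hb
          by_cases hblt : (b : ℕ) < (j : ℕ) + k
          · rw [pow_entry_zero N hN k j b hblt, zero_mul]
          · have hbm : (m : ℕ) < (b : ℕ) := by
              have : (b : ℕ) ≠ (m : ℕ) := fun h' => hb (Fin.ext h')
              simp only [hj] at hblt ⊢
              omega
            rw [IH b (by omega) (by omega), mul_zero]
        · intro h'; exact absurd (Finset.mem_univ m) h'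
    exact main d m (by omega) hm
  · intro h
    funext j
    rw [Matrix.mulVec, dotProduct]
    simp only [Pi.zero_apply]
    apply Finset.sum_eq_zero
    intro m _
    by_cases hm : (m : ℕ) < (j : ℕ) + k
    · rw [pow_entry_zero N hN k j m hm, zero_mul]
    · rw [h m (by omega), mul_zero]

/- ### real eigenvalues of weakly unipotent complex matrices have modulus one -/

private lemma exists_fixed {K V : Type*} [Field K] [AddCommGroup V] [Module K V]
    (f : V →ₗ[K] V) {n : ℕ} {x : V} (hf : (f ^ n) x = 0) (hx : x ≠ 0) :
    ∃ y, y ≠ 0 ∧ f y = 0 := by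
  induction n generalizing x with
  | zero => exact absurd (by simpa using hf) hx
  | succ n IH =>
    by_cases h : f x = 0
    · exact ⟨x, hx, h⟩
    · refine IH (x := f x) ?_ h
      rw [← Module.End.mul_apply, ← pow_succ]
      exact hf

private lemma modulus_one (S U : Matrix (Fin d) (Fin d) ℂ)
    (hcomm : S * U = U * S) (hU : IsNilpotent (U - 1))
    (P : Matrix (Fin d) (Fin d) ℂ) (D : Fin d → ℂ) (hP : IsUnit P.det)
    (hS : S = P * Matrix.diagonal D * P⁻¹) (hD : ∀ i, ‖D i‖ = 1)
    (lam : ℂ) (v : Fin d → ℂ) (hv : v ≠ 0)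
    (hev : (S * U).mulVec v = lam • v) : ‖lam‖ = 1 := by
  classical
  set A : Matrix (Fin d) (Fin d) ℂ ≃ₐ[ℂ] Module.End ℂ (Fin d → ℂ) :=
    Matrix.toLinAlgEquiv' with hA
  set 𝒮 : Module.End ℂ (Fin d → ℂ) := A S with h𝒮
  set 𝒰 : Module.End ℂ (Fin d → ℂ) := A U with h𝒰
  set 𝒢 : Module.End ℂ (Fin d → ℂ) := A (S * U) with h𝒢
  have m1 : (S * U) * S = S * (S * U) := by rw [mul_assoc, ← hcomm]
  have m2 : (S * U) * U = U * (S * U) := by rw [hcomm, mul_assoc, hcomm]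
  have hGS : 𝒢 * 𝒮 = 𝒮 * 𝒢 := by
    rw [h𝒢, h𝒮, ← _root_.map_mul, ← _root_.map_mul, m1]
  have hGU : 𝒢 * 𝒰 = 𝒰 * 𝒢 := by
    rw [h𝒢, h𝒰, ← _root_.map_mul, ← _root_.map_mul, m2]
  have hSU : 𝒮 * 𝒰 = 𝒰 * 𝒮 := by
    rw [h𝒮, h𝒰, ← _root_.map_mul, ← _root_.map_mul, hcomm]
  set W : Submodule ℂ (Fin d → ℂ) := LinearMap.ker (𝒢 - lam • (1 : Module.End ℂ _)) with hW
  have hmemW : ∀ x, x ∈ W ↔ 𝒢 x = lam • x := by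
    intro x
    rw [hW, LinearMap.mem_ker, LinearMap.sub_apply, sub_eq_zero]
    simp
  have hvW : v ∈ W := by
    rw [hmemW, h𝒢, hA, Matrix.toLinAlgEquiv'_apply, hev]
  have hWne : Nontrivial W := by
    refine ⟨⟨v, hvW⟩, 0, ?_⟩
    simp [hv]
  have hSW : ∀ x ∈ W, 𝒮 x ∈ W := by
    intro x hx
    rw [hmemW] at hx ⊢
    have := congrArg (fun f => f x) hGS
    simp only [Module.End.mul_apply] at this
    rw [this, hx, _root_.map_smul]
  set f : Module.End ℂ W := 𝒮.restrict hSW with hf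
  obtain ⟨μ, hμ⟩ := Module.End.exists_eigenvalue f
  obtain ⟨w, hw⟩ := hμ.exists_hasEigenvector
  have hSw : 𝒮 (w : Fin d → ℂ) = μ • (w : Fin d → ℂ) := by
    have := hw.apply_eq_smul
    calc 𝒮 (w : Fin d → ℂ) = ((f w : W) : Fin d → ℂ) := rfl
    _ = μ • (w : Fin d → ℂ) := by rw [this]; rfl
  set W₂ : Submodule ℂ (Fin d → ℂ) :=
    (LinearMap.ker (𝒮 - μ • (1 : Module.End ℂ _))) ⊓ W with hW₂
  have hmem₂ : ∀ x, x ∈ W₂ ↔ (𝒮 x = μ • x ∧ x ∈ W) := by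
    intro x
    rw [hW₂, Submodule.mem_inf, LinearMap.mem_ker, LinearMap.sub_apply, sub_eq_zero]
    simp
  have hwW₂ : (w : Fin d → ℂ) ∈ W₂ := (hmem₂ _).2 ⟨hSw, w.2⟩
  have hwne : (w : Fin d → ℂ) ≠ 0 := fun h => hw.2 (by exact_mod_cast Subtype.ext h)
  have hUW₂ : ∀ x ∈ W₂, (𝒰 - 1) x ∈ W₂ := by
    intro x hx
    rw [hmem₂] at hx
    obtain ⟨hx1, hx2⟩ := hx
    have hUx : 𝒰 x ∈ W₂ := by
      rw [hmem₂]
      constructor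
      · have := congrArg (fun f => f x) hSU
        simp only [Module.End.mul_apply] at this
        rw [this, hx1, _root_.map_smul]
      · rw [hmemW] at hx2 ⊢
        have := congrArg (fun f => f x) hGU
        simp only [Module.End.mul_apply] at this
        rw [this, hx2, _root_.map_smul]
    have h5 : (𝒰 - 1) x = 𝒰 x - x := by simp
    rw [h5]
    exact W₂.sub_mem hUx ((hmem₂ x).2 ⟨hx1, hx2⟩)
  obtain ⟨n, hn⟩ := hU
  have hUn : (𝒰 - 1) ^ n = 0 := by
    have h6 : 𝒰 - 1 = A (U - 1) := by rw [_root_.map_sub, _root_.map_one, h𝒰]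
    rw [h6, ← _root_.map_pow, hn, _root_.map_zero]
  set r : Module.End ℂ W₂ := (𝒰 - 1).restrict hUW₂ with hr
  have hrn : r ^ n = 0 := by
    rw [hr, Module.End.pow_restrict]
    ext x
    simp [hUn]
  have hrnx : (r ^ n) (⟨(w : Fin d → ℂ), hwW₂⟩ : W₂) = 0 := by rw [hrn]; rfl
  obtain ⟨y, hy0, hy⟩ := exists_fixed r hrnx
    (fun h => hwne (by simpa using congrArg Subtype.val h))
  have hyc : ((y : Fin d → ℂ)) ≠ 0 := fun h => hy0 (Subtype.ext h)
  have hUy : (𝒰 - 1) (y : Fin d → ℂ) = 0 := by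
    have := congrArg Subtype.val hy
    rw [hr] at this
    simpa [LinearMap.restrict_apply] using this
  have hUy' : 𝒰 (y : Fin d → ℂ) = (y : Fin d → ℂ) := by
    have h2 : 𝒰 (y : Fin d → ℂ) - (y : Fin d → ℂ) = 0 := by simpa using hUy
    exact sub_eq_zero.1 h2
  set z : Fin d → ℂ := (y : Fin d → ℂ) with hzdef
  have hzW₂ : z ∈ W₂ := y.2
  rw [hmem₂] at hzW₂
  obtain ⟨hSz, hzW⟩ := hzW₂
  have hGz : 𝒢 z = lam • z := (hmemW z).1 hzW
  have hGz' : 𝒢 z = μ • z := by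
    have h7 : 𝒢 z = 𝒮 (𝒰 z) := by
      rw [h𝒢, _root_.map_mul]; rfl
    rw [h7, hUy', hSz]
  have hlam : lam = μ := by
    have h3 : (lam - μ) • z = 0 := by rw [sub_smul, ← hGz, hGz', sub_self]
    rcases smul_eq_zero.1 h3 with h4 | h4
    · exact sub_eq_zero.1 h4
    · exact absurd h4 hyc
  have hz : S.mulVec z = μ • z := by
    rw [← Matrix.toLinAlgEquiv'_apply]; exact hSz
  have hPP : P * P⁻¹ = 1 := Matrix.mul_nonsing_inv P hP
  have hP'P : P⁻¹ * P = 1 := Matrix.nonsing_inv_mul P hP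
  set y' : Fin d → ℂ := P⁻¹.mulVec z with hy'def
  have hy'ne : y' ≠ 0 := by
    intro h0
    apply hyc
    calc z = (P * P⁻¹).mulVec z := by rw [hPP, Matrix.one_mulVec]
    _ = P.mulVec (P⁻¹.mulVec z) := by rw [← Matrix.mulVec_mulVec]
    _ = 0 := by rw [← hy'def, h0, Matrix.mulVec_zero]
  have hdiagS : Matrix.diagonal D * P⁻¹ = P⁻¹ * S := by
    rw [hS, ← mul_assoc, ← mul_assoc, hP'P, one_mul]
  have hdiag : (Matrix.diagonal D).mulVec y' = μ • y' := by
    rw [hy'def, Matrix.mulVec_mulVec, hdiagS, ← Matrix.mulVec_mulVec, hz, Matrix.mulVec_smul]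
  obtain ⟨i, hi⟩ := Function.ne_iff.1 hy'ne
  have hDi : D i * y' i = μ * y' i := by
    have := congrFun hdiag i
    rwa [Matrix.mulVec_diagonal] at this
  have hDμ : D i = μ := by
    rcases mul_eq_mul_right_iff.1 hDi with h | h
    · exact h
    · exact absurd h hi
  rw [hlam, ← hDμ, hD i]

end Aux

set_option maxHeartbeats 1600000 in
/-- Let `g ∈ SL(d, ℝ)` be weakly unipotent, and suppose there are complete flags `F₁, F₂`
with `g(F₁) = F₁` and `(F₁, g⁻¹(F₂), F₂, g(F₂))` positive. Then `g = ±u` for a unipotent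
`u` with a single Jordan block, and `F₁` is the unique complete flag fixed by `g`. -/
theorem weaklyUnipotent_fixed_flag_unique
    (d : ℕ) (hd : 1 ≤ d) (g : Matrix.SpecialLinearGroup (Fin d) ℝ)
    (hwu : IsWeaklyUnipotent (g : Matrix (Fin d) (Fin d) ℝ))
    (F₁ F₂ : ℕ → Submodule ℝ (Fin d → ℝ))
    (hF₁ : IsCompleteFlag d F₁) (hF₂ : IsCompleteFlag d F₂)
    (hfix : mapFlag (g : Matrix (Fin d) (Fin d) ℝ) F₁ = F₁)
    (hpos : PositiveQuadruple d F₁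
      (mapFlag ((g⁻¹ : Matrix.SpecialLinearGroup (Fin d) ℝ) : Matrix (Fin d) (Fin d) ℝ) F₂)
      F₂
      (mapFlag (g : Matrix (Fin d) (Fin d) ℝ) F₂)) :
    (∃ ε : ℝ, (ε = 1 ∨ ε = -1) ∧
      IsNilpotent (ε • (g : Matrix (Fin d) (Fin d) ℝ) - 1) ∧
      (ε • (g : Matrix (Fin d) (Fin d) ℝ) - 1) ^ (d - 1) ≠ 0) ∧
    ∀ F : ℕ → Submodule ℝ (Fin d → ℝ), IsCompleteFlag d F →
      mapFlag (g : Matrix (Fin d) (Fin d) ℝ) F = F → F = F₁ := by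
  classical
  obtain ⟨B, u₂, u₃, hB, hu₂, hu₃, h42, h43⟩ := hpos
  set g' : Matrix (Fin d) (Fin d) ℝ := (g : Matrix (Fin d) (Fin d) ℝ) with hg'
  set gi : Matrix (Fin d) (Fin d) ℝ :=
    ((g⁻¹ : Matrix.SpecialLinearGroup (Fin d) ℝ) : Matrix (Fin d) (Fin d) ℝ) with hgi
  have hggi : g' * gi = 1 := by
    rw [hg', hgi, ← Matrix.SpecialLinearGroup.coe_mul, mul_inv_cancel,
      Matrix.SpecialLinearGroup.coe_one]
  set F₄ : ℕ → Submodule ℝ (Fin d → ℝ) := mapFlag g' F₂ with hF₄def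
  -- F₄ is a complete flag
  have hF₄rank : ∀ i, i ≤ d → Module.finrank ℝ (F₄ i) = i := by
    intro i hi
    have : F₄ i = (F₂ i).map (Matrix.SpecialLinearGroup.toLin' g :
        (Fin d → ℝ) →ₗ[ℝ] (Fin d → ℝ)) := by
      rw [hF₄def]
      show (F₂ i).map (Matrix.toLin' g') = _
      rw [Matrix.SpecialLinearGroup.toLin'_to_linearMap]
    rw [this, LinearEquiv.finrank_map_eq]
    exact hF₂.2 i hi
  have hF₄mono : Monotone F₄ := fun a b hab => Submodule.map_mono (hF₂.1 hab)
  have hB1 : ∀ j : Fin d, B j ∈ F₁ ((j : ℕ) + 1) := fun j => ((hB j).1 : _)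
  have hB4 : ∀ j : Fin d, B j ∈ F₄ (d - (j : ℕ)) := fun j => ((hB j).2 : _)
  -- spans
  have hF₁span : ∀ i : ℕ, i ≤ d →
      F₁ i = Submodule.span ℝ (B '' {m : Fin d | (m : ℕ) < i}) :=
    fun i hi => flag_span_lt B hF₁.1 hF₁.2 hB1 hi
  have hF₄span : ∀ i : ℕ, i ≤ d →
      F₄ i = Submodule.span ℝ (B '' {m : Fin d | d - i ≤ (m : ℕ)}) :=
    fun i hi => flag_span_ge B hF₄mono hF₄rank hB4 hi
  -- matrices
  set M : Matrix (Fin d) (Fin d) ℝ := matrixWrt B g' with hM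
  set U₂ : Matrix (Fin d) (Fin d) ℝ := matrixWrt B u₂ with hU₂
  set U₃ : Matrix (Fin d) (Fin d) ℝ := matrixWrt B u₃ with hU₃
  have hU₂upper : U₂.BlockTriangular id := fun i j hij => hu₂.2.1 i j hij
  have hU₃upper : U₃.BlockTriangular id := fun i j hij => hu₃.2.1 i j hij
  have hU₂pos : ∀ i j : Fin d, i ≤ j → 0 < U₂ i j := fun i j hij => tp_entry_pos hu₂.2.2 hij
  have hU₃pos : ∀ i j : Fin d, i ≤ j → 0 < U₃ i j := fun i j hij => tp_entry_pos hu₃.2.2 hij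
  -- M is upper triangular
  have hMupper : M.BlockTriangular id := by
    intro i j hij
    refine mw_entry_zero B g' (fun j => {m : Fin d | (m : ℕ) < (j : ℕ) + 1}) ?_ ?_
    · intro j'
      have h1 : B j' ∈ F₁ ((j' : ℕ) + 1) := hB1 j'
      have h2 : (F₁ ((j' : ℕ) + 1)).map (Matrix.toLin' g') = F₁ ((j' : ℕ) + 1) :=
        congrFun hfix ((j' : ℕ) + 1)
      have h3 : Matrix.toLin' g' (B j') ∈ F₁ ((j' : ℕ) + 1) := by
        rw [← h2]
        exact Submodule.mem_map_of_mem h1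
      rwa [hF₁span ((j' : ℕ) + 1) (by omega)] at h3
    · simp only [Set.mem_setOf_eq, not_lt]
      exact_mod_cast hij
  -- lower triangularity of matrices fixing F₄
  have hlowgen : ∀ w : Matrix (Fin d) (Fin d) ℝ, mapFlag w F₄ = F₄ →
      (matrixWrt B w).BlockTriangular (OrderDual.toDual : Fin d → (Fin d)ᵒᵈ) := by
    intro w hw i j hij
    have hij' : i < j := hij
    refine mw_entry_zero B w (fun j => {m : Fin d | (j : ℕ) ≤ (m : ℕ)}) ?_ ?_
    · intro j'
      have h1 : B j' ∈ F₄ (d - (j' : ℕ)) := hB4 j'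
      have h2 : (F₄ (d - (j' : ℕ))).map (Matrix.toLin' w) = F₄ (d - (j' : ℕ)) :=
        congrFun hw (d - (j' : ℕ))
      have h3 : Matrix.toLin' w (B j') ∈ F₄ (d - (j' : ℕ)) := by
        rw [← h2]
        exact Submodule.mem_map_of_mem h1
      rw [hF₄span (d - (j' : ℕ)) (by omega)] at h3
      have hset : {m : Fin d | d - (d - (j' : ℕ)) ≤ (m : ℕ)} = {m : Fin d | (j' : ℕ) ≤ (m : ℕ)} := by
        ext m
        have := j'.2
        simp only [Set.mem_setOf_eq]
        omega
      rwa [hset] at h3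
    · simp only [Set.mem_setOf_eq, not_le]
      exact_mod_cast hij'
  -- (α) : g' * u₃ fixes F₄
  have halpha : mapFlag (g' * u₃) F₄ = F₄ := by
    rw [← mapFlag_mapFlag, h43, hF₄def]
  -- u₃ is invertible
  have hdetU₃ : U₃.det = ∏ i, U₃ i i := Matrix.det_of_upperTriangular hU₃upper
  have hdetU₃pos : 0 < U₃.det := by
    rw [hdetU₃]
    exact Finset.prod_pos fun i _ => hU₃pos i i le_rfl
  have hdetu₃ : IsUnit u₃.det := by
    rw [← matrixWrt_det B, ← hU₃]
    exact hdetU₃pos.ne'.isUnit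
  have hiu₃ : u₃⁻¹ * u₃ = 1 := Matrix.nonsing_inv_mul _ hdetu₃
  -- (β)
  have hbeta : mapFlag (u₃⁻¹ * (g' * (u₃ * u₂))) F₄ = F₄ := by
    have step1 : mapFlag (g' * (u₃ * u₂)) F₄ = mapFlag u₃ F₄ := by
      rw [← mapFlag_mapFlag, h42, hF₄def, mapFlag_mapFlag, hggi, mapFlag_one]
      exact h43.symm
    calc mapFlag (u₃⁻¹ * (g' * (u₃ * u₂))) F₄
        = mapFlag u₃⁻¹ (mapFlag (g' * (u₃ * u₂)) F₄) := (mapFlag_mapFlag _ _ _).symm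
      _ = mapFlag u₃⁻¹ (mapFlag u₃ F₄) := by rw [step1]
      _ = mapFlag (u₃⁻¹ * u₃) F₄ := mapFlag_mapFlag _ _ _
      _ = F₄ := by rw [hiu₃, mapFlag_one]
  -- L := M * U₃ is diagonal
  set L : Matrix (Fin d) (Fin d) ℝ := M * U₃ with hL
  have hLmw : L = matrixWrt B (g' * u₃) := by rw [hL, matrixWrt_mul]
  have hLlower : L.BlockTriangular (OrderDual.toDual : Fin d → (Fin d)ᵒᵈ) := by
    rw [hLmw]; exact hlowgen _ halpha
  have hLupper : L.BlockTriangular id := hMupper.mul hU₃upper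
  have hLdiag : ∀ i j : Fin d, i ≠ j → L i j = 0 := by
    intro i j hij
    rcases lt_or_gt_of_ne hij with h | h
    · exact hLlower (show (OrderDual.toDual j : (Fin d)ᵒᵈ) < OrderDual.toDual i from h)
    · exact hLupper (show (id j : Fin d) < id i from h)
  -- K is diagonal
  set K : Matrix (Fin d) (Fin d) ℝ := matrixWrt B (u₃⁻¹ * (g' * (u₃ * u₂))) with hK
  have hKlower : K.BlockTriangular (OrderDual.toDual : Fin d → (Fin d)ᵒᵈ) := hlowgen _ hbeta
  set Ui : Matrix (Fin d) (Fin d) ℝ := matrixWrt B u₃⁻¹ with hUi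
  have hUiU₃ : Ui * U₃ = 1 := by rw [hUi, hU₃, ← matrixWrt_mul, hiu₃, matrixWrt_one]
  have hU₃Ui : U₃ * Ui = 1 := mul_eq_one_comm.1 hUiU₃
  have hUieq : Ui = U₃⁻¹ := (Matrix.inv_eq_left_inv hUiU₃).symm
  have hUiupper : Ui.BlockTriangular id := by
    rw [hUieq]
    haveI : Invertible U₃ := U₃.invertibleOfIsUnitDet (hdetU₃pos.ne'.isUnit)
    exact Matrix.blockTriangular_inv_of_blockTriangular hU₃upper
  have hKeq : K = Ui * (M * (U₃ * U₂)) := by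
    rw [hK, matrixWrt_mul, matrixWrt_mul, matrixWrt_mul, ← hUi, ← hM, ← hU₃, ← hU₂]
  have hKupper : K.BlockTriangular id := by
    rw [hKeq]
    exact hUiupper.mul (hMupper.mul (hU₃upper.mul hU₂upper))
  have hKdiag : ∀ i j : Fin d, i ≠ j → K i j = 0 := by
    intro i j hij
    rcases lt_or_gt_of_ne hij with h | h
    · exact hKlower (show (OrderDual.toDual j : (Fin d)ᵒᵈ) < OrderDual.toDual i from h)
    · exact hKupper (show (id j : Fin d) < id i from h)
  -- key identity  L * U₂ = U₃ * K
  have hLU₂ : L * U₂ = U₃ * K := by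
    rw [hL, hKeq, ← mul_assoc, hU₃Ui, one_mul, ← mul_assoc]
  have hE : ∀ i j : Fin d, L i i * U₂ i j = U₃ i j * K j j := by
    intro i j
    have h1 : (L * U₂) i j = L i i * U₂ i j := diagL_mul_entry hLdiag i j
    have h2 : (U₃ * K) i j = U₃ i j * K j j := mul_diagR_entry hKdiag i j
    rw [← h1, ← h2, hLU₂]
  -- L diag entries nonzero
  have hdetL : L.det = U₃.det := by
    rw [hL, Matrix.det_mul]
    have : M.det = 1 := by rw [hM, matrixWrt_det]; exact g.2
    rw [this, one_mul]
  have hLprod : ∏ i, L i i ≠ 0 := by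
    rw [← Matrix.det_of_upperTriangular hLupper, hdetL]
    exact hdetU₃pos.ne'
  have hLne : ∀ i : Fin d, L i i ≠ 0 := by
    intro i hzero
    exact hLprod (Finset.prod_eq_zero (Finset.mem_univ i) hzero)
  -- same sign of all L i i
  have hLsign' : ∀ i j : Fin d, i ≤ j → 0 < L i i * L j j := by
    intro i j hij
    rcases eq_or_lt_of_le hij with rfl | hlt
    · exact mul_self_pos.2 (hLne i)
    · have e1 := hE i j
      have e2 := hE j j
      have p1 : 0 < U₂ i j := hU₂pos i j hij
      have p2 : 0 < U₃ i j := hU₃pos i j hij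
      have p3 : 0 < U₂ j j := hU₂pos j j le_rfl
      have p4 : 0 < U₃ j j := hU₃pos j j le_rfl
      rcases (hLne j).lt_or_gt with hneg | hposj
      · -- L j j < 0
        have hKjj : K j j < 0 := by nlinarith
        have : L i i < 0 := by nlinarith
        nlinarith
      · have hKjj : 0 < K j j := by nlinarith
        have : 0 < L i i := by nlinarith
        nlinarith
  have hLsign : ∀ i j : Fin d, 0 < L i i * L j j := by
    intro i j
    rcases le_total i j with h | h
    · exact hLsign' i j h
    · rw [mul_comm]; exact hLsign' j i h
  -- eigenvalues of g are ±1
  have heig : ∀ i : Fin d, M i i = 1 ∨ M i i = -1 := by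
    intro i
    set lam : ℝ := M i i with hlam
    have hsub_upper : (M - lam • 1).BlockTriangular id := by
      intro a b hab
      have h1 : M a b = 0 := hMupper hab
      have h2 : (1 : Matrix (Fin d) (Fin d) ℝ) a b = 0 :=
        Matrix.one_apply_ne (fun h => absurd (h ▸ hab) (lt_irrefl _))
      simp [Matrix.sub_apply, Matrix.smul_apply, h1, h2]
    have hdet0 : (M - lam • 1).det = 0 := by
      rw [Matrix.det_of_upperTriangular hsub_upper]
      refine Finset.prod_eq_zero (Finset.mem_univ i) ?_
      simp [Matrix.sub_apply, Matrix.smul_apply, Matrix.one_apply_eq, hlam]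
    have hdetg : (g' - lam • 1).det = 0 := by
      have hmw : matrixWrt B (g' - lam • (1 : Matrix (Fin d) (Fin d) ℝ)) = M - lam • 1 := by
        rw [matrixWrt_sub, matrixWrt_smul, matrixWrt_one, ← hM]
      rw [← matrixWrt_det B, hmw, hdet0]
    set φ : Matrix (Fin d) (Fin d) ℝ →+* Matrix (Fin d) (Fin d) ℂ :=
      (Complex.ofRealHom).mapMatrix with hφ
    have hdetc : (φ (g' - lam • 1)).det = 0 := by
      rw [hφ, ← RingHom.map_det, hdetg, map_zero]
    have hexp : φ (g' - lam • 1) = φ g' - (lam : ℂ) • 1 := by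
      rw [map_sub]
      congr 1
      ext a b
      by_cases hab : a = b
      · subst hab
        simp [hφ, RingHom.mapMatrix_apply, Matrix.map_apply, Matrix.smul_apply,
          Matrix.one_apply_eq]
      · simp [hφ, RingHom.mapMatrix_apply, Matrix.map_apply, Matrix.smul_apply,
          Matrix.one_apply_ne hab]
    obtain ⟨v, hv, hv0⟩ : ∃ v ≠ 0, (φ g' - (lam : ℂ) • 1).mulVec v = 0 := by
      apply Matrix.exists_mulVec_eq_zero_iff.2
      rw [← hexp]
      exact hdetc
    have hev : (φ g').mulVec v = (lam : ℂ) • v := by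
      rw [Matrix.sub_mulVec, sub_eq_zero] at hv0
      rw [hv0, Matrix.smul_mulVec, Matrix.one_mulVec]
    obtain ⟨s, u, hgsu, hsu, hunil, P, D, hPdet, hsPD, hD⟩ := hwu
    have hφg : φ g' = φ s * φ u := by rw [hgsu, map_mul]
    have habs : ‖((lam : ℂ))‖ = 1 := by
      refine modulus_one (φ s) (φ u) ?_ ?_ P D hPdet ?_ hD _ v hv ?_
      · rw [← map_mul, ← map_mul, hsu]
      · obtain ⟨n, hn⟩ := hunil
        refine ⟨n, ?_⟩
        have : φ u - 1 = φ (u - 1) := by rw [map_sub, map_one]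
        rw [this, ← map_pow, hn, map_zero]
      · rw [hφ, RingHom.mapMatrix_apply]
        exact hsPD
      · rw [← hφg]
        exact hev
    rw [Complex.norm_real, Real.norm_eq_abs] at habs
    exact (abs_eq (by norm_num)).1 habs
  -- diagonal of M vs diagonal of L
  have hMLdiag : ∀ i : Fin d, M i i * U₃ i i = L i i := by
    intro i
    rw [hL, upper_mul_diag_entry hMupper hU₃upper]
  -- the sign ε
  set i₀ : Fin d := ⟨0, hd⟩ with hi₀
  set ε : ℝ := M i₀ i₀ with hε
  have hεpm : ε = 1 ∨ ε = -1 := heig i₀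
  have hε2 : ε * ε = 1 := by rcases hεpm with h | h <;> rw [h] <;> norm_num
  have hεne : ε ≠ 0 := by rcases hεpm with h | h <;> rw [h] <;> norm_num
  have hMii : ∀ i : Fin d, M i i = ε := by
    intro i
    have hsign : 0 < M i i * ε := by
      have h1 : 0 < L i i * L i₀ i₀ := hLsign i i₀
      have h2 := hMLdiag i
      have h3 := hMLdiag i₀
      have p1 : 0 < U₃ i i := hU₃pos i i le_rfl
      have p2 : 0 < U₃ i₀ i₀ := hU₃pos i₀ i₀ le_rfl
      have e : M i i * M i₀ i₀ * (U₃ i i * U₃ i₀ i₀) = L i i * L i₀ i₀ := by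
        rw [← h2, ← h3]; ring
      rw [hε]
      nlinarith [mul_pos p1 p2]
    rcases heig i with h | h <;> rcases hεpm with h' | h'
    · rw [h, h']
    · exfalso; rw [h, h'] at hsign; norm_num at hsign
    · exfalso; rw [h, h'] at hsign; norm_num at hsign
    · rw [h, h']
  -- L i i = ε * U₃ i i
  have hLii : ∀ i : Fin d, L i i = ε * U₃ i i := by
    intro i
    rw [← hMLdiag i, hMii i]
  -- inverse of L
  set Linv : Matrix (Fin d) (Fin d) ℝ := Matrix.diagonal (fun i => (L i i)⁻¹) with hLinv
  have hLeqD : L = Matrix.diagonal (fun i => L i i) := by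
    ext a b
    by_cases hab : a = b
    · subst hab; simp [Matrix.diagonal_apply_eq]
    · rw [hLdiag a b hab, Matrix.diagonal_apply_ne _ hab]
  have hLLinv : L * Linv = 1 := by
    have e0 : L * Linv = Matrix.diagonal (fun i => L i i * (L i i)⁻¹) := by
      nth_rewrite 1 [hLeqD]
      rw [hLinv, Matrix.diagonal_mul_diagonal]
    rw [e0]
    have e1 : (fun i => L i i * (L i i)⁻¹) = fun _ : Fin d => (1 : ℝ) := by
      funext i; exact mul_inv_cancel₀ (hLne i)
    rw [e1, Matrix.diagonal_one]
  -- V := ε • (U₃ * Linv) is the inverse of A := ε • M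
  set A : Matrix (Fin d) (Fin d) ℝ := ε • M with hA
  set V : Matrix (Fin d) (Fin d) ℝ := ε • (U₃ * Linv) with hV
  have hAV : A * V = 1 := by
    rw [hA, hV, Matrix.smul_mul, Matrix.mul_smul, smul_smul, hε2, one_smul, ← mul_assoc, ← hL,
      hLLinv]
  have hVA : V * A = 1 := mul_eq_one_comm.1 hAV
  have hVentry : ∀ i j : Fin d, V i j = ε * (U₃ i j * (L j j)⁻¹) := by
    intro i j
    rw [hV, Matrix.smul_apply, Matrix.mul_diagonal]
    rfl
  -- N := V - 1 is strictly upper with nonzero superdiagonal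
  set N : Matrix (Fin d) (Fin d) ℝ := V - 1 with hN
  have hNstrict : ∀ i j : Fin d, (j : ℕ) ≤ (i : ℕ) → N i j = 0 := by
    intro i j hij
    rcases eq_or_lt_of_le hij with heq | hlt
    · have : j = i := Fin.ext heq
      subst this
      rw [hN, Matrix.sub_apply, hVentry, hLii, Matrix.one_apply_eq]
      have hU₃ne : U₃ j j ≠ 0 := (hU₃pos j j le_rfl).ne'
      rw [mul_inv]
      have e1 : ε * (U₃ j j * (ε⁻¹ * (U₃ j j)⁻¹)) = (ε * ε⁻¹) * (U₃ j j * (U₃ j j)⁻¹) := by ring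
      rw [e1, mul_inv_cancel₀ hεne, mul_inv_cancel₀ hU₃ne, one_mul, sub_self]
    · rw [hN, Matrix.sub_apply, hVentry, hU₃upper (show (id j : Fin d) < id i from hlt),
        Matrix.one_apply_ne (by exact fun h => absurd (congrArg Fin.val h) (by omega)), zero_mul,
        mul_zero, sub_zero]
  have hNsd : ∀ i j : Fin d, (j : ℕ) = (i : ℕ) + 1 → N i j ≠ 0 := by
    intro i j hij
    have hij' : i ≠ j := fun h => by rw [h] at hij; omega
    rw [hN, Matrix.sub_apply, Matrix.one_apply_ne hij', sub_zero, hVentry]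
    have h1 : 0 < U₃ i j := hU₃pos i j (by apply Fin.le_def.2; omega)
    exact mul_ne_zero hεne (mul_ne_zero h1.ne' (inv_ne_zero (hLne j)))
  have hNd : N ^ d = 0 := pow_d_eq_zero N hNstrict
  have hNd1 : N ^ (d - 1) ≠ 0 := by
    intro h0
    have := pow_entry_ne_zero N hNstrict hNsd (d - 1) ⟨0, hd⟩ ⟨d - 1, by omega⟩ (by simp)
    rw [h0] at this
    exact this rfl
  -- relations between A - 1 and N
  have hA1 : A - 1 = A * (1 - V) := by
    rw [mul_sub, mul_one, hAV]
  have hA1' : A - 1 = (1 - V) * A := by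
    rw [sub_mul, one_mul, hVA]
  have hcommA : Commute A (1 - V) := by
    unfold Commute SemiconjBy
    rw [← hA1, ← hA1']
  have hpowA1 : ∀ k : ℕ, (A - 1) ^ k = A ^ k * (1 - V) ^ k := by
    intro k
    rw [hA1, hcommA.mul_pow]
  have h1Vpow : ∀ k : ℕ, (1 - V) ^ k = (-1 : ℝ) ^ k • N ^ k := by
    intro k
    have : (1 : Matrix (Fin d) (Fin d) ℝ) - V = (-1 : ℝ) • N := by
      rw [hN, neg_one_smul, neg_sub]
    rw [this, smul_pow]
  have hcommVA : Commute V A := by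
    unfold Commute SemiconjBy
    rw [hVA, hAV]
  have hVAk : ∀ k : ℕ, V ^ k * A ^ k = 1 := by
    intro k
    rw [← hcommVA.mul_pow, hVA, one_pow]
  -- nilpotency and non-vanishing for A - 1
  have hAnil : (A - 1) ^ d = 0 := by
    rw [hpowA1, h1Vpow, hNd, smul_zero, mul_zero]
  have hApow : (A - 1) ^ (d - 1) ≠ 0 := by
    intro h0
    apply hNd1
    have h1 : (1 - V) ^ (d - 1) = 0 := by
      have h2 : V ^ (d - 1) * ((A - 1) ^ (d - 1)) = (1 - V) ^ (d - 1) := by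
        rw [hpowA1, ← mul_assoc, hVAk, one_mul]
      rw [← h2, h0, mul_zero]
    rw [h1Vpow] at h1
    have hne : ((-1 : ℝ) ^ (d - 1)) ≠ 0 := by
      apply pow_ne_zero; norm_num
    exact (smul_eq_zero.1 h1).resolve_left hne
  -- transfer to g'
  have hAeq : A = matrixWrt B (ε • g') := by rw [matrixWrt_smul, ← hM, ← hA]
  have hA1eq : ∀ k : ℕ, matrixWrt B ((ε • g' - 1) ^ k) = (A - 1) ^ k := by
    intro k
    rw [matrixWrt_pow, matrixWrt_sub, matrixWrt_one, ← hAeq]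
  have hgnil : (ε • g' - 1) ^ d = 0 := by
    apply matrixWrt_inj B
    rw [hA1eq, hAnil, matrixWrt_zero]
  have hgpow : (ε • g' - 1) ^ (d - 1) ≠ 0 := by
    intro h0
    apply hApow
    rw [← hA1eq, h0, matrixWrt_zero]
  refine ⟨⟨ε, hεpm, ⟨d, hgnil⟩, hgpow⟩, ?_⟩
  -- uniqueness of the fixed flag
  intro F hF hfixF
  -- characterize ker ((toLin' (ε•g'-1))^k) as the span of the first k basis vectors
  have hKER : ∀ k : ℕ, ∀ x : Fin d → ℝ, Matrix.toLin' ((ε • g' - 1) ^ k) x = 0 ↔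
      x ∈ Submodule.span ℝ (B '' {m : Fin d | (m : ℕ) < k}) := by
    intro k x
    have hrepr : (B.repr (Matrix.toLin' ((ε • g' - 1) ^ k) x) : Fin d → ℝ)
        = (matrixWrt B ((ε • g' - 1) ^ k)).mulVec (B.repr x) := by
      rw [matrixWrt]
      exact (LinearMap.toMatrix_mulVec_repr B B _ x).symm
    have step1 : Matrix.toLin' ((ε • g' - 1) ^ k) x = 0 ↔
        (matrixWrt B ((ε • g' - 1) ^ k)).mulVec (B.repr x) = 0 := by
      rw [← hrepr]
      constructor
      · intro h; rw [h]; simp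
      · intro h
        have : B.repr (Matrix.toLin' ((ε • g' - 1) ^ k) x) = 0 := by
          ext i; exact congrFun h i
        exact (LinearEquiv.map_eq_zero_iff B.repr).1 this
    rw [step1, hA1eq, hpowA1, h1Vpow]
    have step2 : (A ^ k * ((-1 : ℝ) ^ k • N ^ k)).mulVec (B.repr x) = 0 ↔
        (N ^ k).mulVec (B.repr x) = 0 := by
      constructor
      · intro h
        have h2 : (A ^ k).mulVec (((-1 : ℝ) ^ k • N ^ k).mulVec (B.repr x)) = 0 := by
          rw [Matrix.mulVec_mulVec]; exact h
        have h3 : ((-1 : ℝ) ^ k • N ^ k).mulVec (B.repr x) = 0 := by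
          have := congrArg (fun z => (V ^ k).mulVec z) h2
          simpa [Matrix.mulVec_mulVec, ← mul_assoc, hVAk k, one_mul, Matrix.one_mulVec,
            Matrix.mulVec_zero] using this
        rw [Matrix.smul_mulVec] at h3
        have hne : ((-1 : ℝ) ^ k) ≠ 0 := by apply pow_ne_zero; norm_num
        exact (smul_eq_zero.1 h3).resolve_left hne
      · intro h
        rw [← Matrix.mulVec_mulVec, Matrix.smul_mulVec, h, smul_zero, Matrix.mulVec_zero]
    rw [step2, pow_mulVec_eq_zero_iff N hNstrict hNsd k]
    rw [B.mem_span_image]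
    constructor
    · intro h m hm
      simp only [Set.mem_setOf_eq]
      by_contra hcon
      exact (Finsupp.mem_support_iff.1 hm) (h m (by omega))
    · intro h m hm
      by_contra hcon
      have : m ∈ (B.repr x).support := Finsupp.mem_support_iff.2 hcon
      have := h this
      simp only [Set.mem_setOf_eq] at this
      omega
  have htop : Module.finrank ℝ (Fin d → ℝ) = d := Module.finrank_fin_fun ℝ
  -- main flag comparison
  funext i
  by_cases hi : i ≤ d
  · -- F i is invariant under toLin' (ε • g' - 1)
    have hinv : ∀ x ∈ F i, Matrix.toLin' (ε • g' - 1) x ∈ F i := by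
      intro x hx
      have h1 : Matrix.toLin' g' x ∈ F i := by
        have h2 : (F i).map (Matrix.toLin' g') = F i := congrFun hfixF i
        rw [← h2]
        exact Submodule.mem_map_of_mem hx
      have h3 : Matrix.toLin' (ε • g' - 1) x = ε • Matrix.toLin' g' x - x := by
        rw [map_sub, Matrix.toLin'_one, _root_.map_smul]
        simp
      rw [h3]
      exact (F i).sub_mem ((F i).smul_mem ε h1) hx
    set ρ : Module.End ℝ (F i) := (Matrix.toLin' (ε • g' - 1)).restrict hinv with hρ
    have hTp : ∀ k : ℕ, (Matrix.toLin' (ε • g' - 1)) ^ k = Matrix.toLin' ((ε • g' - 1) ^ k) := by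
      intro k
      have : Matrix.toLin' (ε • g' - 1) =
          (Matrix.toLinAlgEquiv' : Matrix (Fin d) (Fin d) ℝ ≃ₐ[ℝ] _) (ε • g' - 1) := rfl
      rw [this, ← _root_.map_pow]
      rfl
    have hρd : ρ ^ d = 0 := by
      rw [hρ, Module.End.pow_restrict]
      apply LinearMap.ext
      intro x
      apply Subtype.ext
      rw [LinearMap.restrict_apply]
      have h0 : (Matrix.toLin' (ε • g' - 1)) ^ d = 0 := by rw [hTp, hgnil, map_zero]
      show (Matrix.toLin' (ε • g' - 1) ^ d) (x : Fin d → ℝ)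
          = (((0 : Module.End ℝ (F i)) x : F i) : Fin d → ℝ)
      rw [h0]
      rfl
    have hfr : Module.finrank ℝ (F i) = i := hF.2 i hi
    have hkerd : LinearMap.ker (ρ ^ d) = LinearMap.ker (ρ ^ i) := by
      have e1 : LinearMap.ker (ρ ^ d) = LinearMap.ker (ρ ^ Module.finrank ℝ (F i)) :=
        Module.End.ker_pow_eq_ker_pow_finrank_of_le (by omega)
      rw [e1, hfr]
    have hρi : ∀ w : F i, (ρ ^ i) w = 0 := by
      intro w
      have : w ∈ LinearMap.ker (ρ ^ i) := by
        rw [← hkerd]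
        rw [LinearMap.mem_ker, hρd]
        rfl
      exact this
    have hFle : F i ≤ Submodule.span ℝ (B '' {m : Fin d | (m : ℕ) < i}) := by
      intro x hx
      rw [← hKER i x]
      have h4 : Matrix.toLin' ((ε • g' - 1) ^ i) x = ((Matrix.toLin' (ε • g' - 1)) ^ i) x := by
        rw [hTp]
      have h5 : ((Matrix.toLin' (ε • g' - 1)) ^ i) x = ((ρ ^ i) ⟨x, hx⟩ : Fin d → ℝ) := by
        rw [hρ, Module.End.pow_restrict, LinearMap.restrict_apply]
      rw [h4, h5, hρi ⟨x, hx⟩]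
      rfl
    rw [← hF₁span i hi] at hFle
    exact Submodule.eq_of_le_of_finrank_eq hFle (by rw [hfr, hF₁.2 i hi])
  · -- i > d : both are ⊤
    push_neg at hi
    have hFd : F d = ⊤ := Submodule.eq_top_of_finrank_eq (by rw [hF.2 d le_rfl, htop])
    have hF₁d : F₁ d = ⊤ := Submodule.eq_top_of_finrank_eq (by rw [hF₁.2 d le_rfl, htop])
    have h1 : F i = ⊤ := by
      apply top_le_iff.1
      rw [← hFd]
      exact hF.1 (by omega)
    have h2 : F₁ i = ⊤ := by
      apply top_le_iff.1
      rw [← hF₁d]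
      exact hF₁.1 (by omega)
    rw [h1, h2]

end
end

section
/- Let V be a finite-dimensional real vector space with a norm, decomposed as V = V₁ ⊕ V₂, and let φ = [[A, B],[C, D]] be an invertible linear map written in block form relative to this decomposition. Suppose A and D are invertible and max{‖A⁻¹B‖, ‖D⁻¹C‖, ‖A‖·‖D⁻¹‖} < 1/3 (operator norms). Then the graph transform ψ(f) = (B + A f)(D + C f)⁻¹ is well defined on the set R₁ = {f ∈ Hom(V₂, V₁) : ‖f‖ < 1}, maps R₁ into R_{2/3} = {f : ‖f‖ ≤ 2/3}, and is Lipschitz with constant 5/6: ‖ψ(f₁) − ψ(f₂)‖ ≤ (5/6)‖f₁ − f₂‖ for all f₁, f₂ ∈ R₁. -/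
open ContinuousLinearMap

private lemma gt_norm_inv_oneSub_le {V : Type*} [NormedAddCommGroup V] [NormedSpace ℝ V]
    [CompleteSpace V] (t : V →L[ℝ] V) (h : ‖t‖ < 1) :
    ‖(↑(Units.oneSub t h)⁻¹ : V →L[ℝ] V)‖ ≤ (1 - ‖t‖)⁻¹ := by
  have h1 : (↑(Units.oneSub t h)⁻¹ : V →L[ℝ] V) = ∑' n : ℕ, t ^ n := rfl
  rw [h1]
  have h2 := tsum_geometric_le_of_norm_lt_one t h
  have hone : ‖(1 : V →L[ℝ] V)‖ ≤ 1 := by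
    rw [ContinuousLinearMap.one_def]; exact norm_id_le
  linarith

private lemma gt_aux {V₁ V₂ : Type*}
    [NormedAddCommGroup V₁] [NormedSpace ℝ V₁]
    [NormedAddCommGroup V₂] [NormedSpace ℝ V₂] [CompleteSpace V₂]
    (C : V₁ →L[ℝ] V₂) (D : V₂ ≃L[ℝ] V₂)
    (hDC : ‖(D.symm : V₂ →L[ℝ] V₂).comp C‖ < 1 / 3)
    (f : V₂ →L[ℝ] V₁) (hf : ‖f‖ < 1) :
    ∃ (e : (V₂ →L[ℝ] V₂)ˣ) (j : V₂ →L[ℝ] V₂),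
      (e : V₂ →L[ℝ] V₂) = (D : V₂ →L[ℝ] V₂) + C.comp f ∧
      (↑e⁻¹ : V₂ →L[ℝ] V₂) = j.comp (D.symm : V₂ →L[ℝ] V₂) ∧ ‖j‖ ≤ 3 / 2 := by
  set t : V₂ →L[ℝ] V₂ := ((D.symm : V₂ →L[ℝ] V₂).comp C).comp f with ht_def
  have htn : ‖t‖ < 1 / 3 := by
    have h1 : ‖t‖ ≤ ‖(D.symm : V₂ →L[ℝ] V₂).comp C‖ * ‖f‖ := opNorm_comp_le _ _
    have h2 : ‖(D.symm : V₂ →L[ℝ] V₂).comp C‖ * ‖f‖ ≤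
        ‖(D.symm : V₂ →L[ℝ] V₂).comp C‖ * 1 :=
      mul_le_mul_of_nonneg_left hf.le (norm_nonneg _)
    linarith
  have hneg : ‖-t‖ < 1 := by rw [norm_neg]; linarith
  set w := Units.oneSub (-t) hneg with hw_def
  have hw : (w : V₂ →L[ℝ] V₂) = 1 + t := by
    rw [hw_def, Units.val_oneSub, sub_neg_eq_add]
  have hwinv : ‖(↑w⁻¹ : V₂ →L[ℝ] V₂)‖ ≤ 3 / 2 := by
    have h1 := gt_norm_inv_oneSub_le (-t) hneg
    have h2 : (1 - ‖-t‖)⁻¹ ≤ 3 / 2 := by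
      rw [norm_neg]
      have h3 : (2 : ℝ) / 3 ≤ 1 - ‖t‖ := by linarith
      calc (1 - ‖t‖)⁻¹ ≤ ((2 : ℝ) / 3)⁻¹ := by
            apply inv_anti₀ (by norm_num) h3
        _ = 3 / 2 := by norm_num
    linarith
  refine ⟨D.toUnit * w, ↑w⁻¹, ?_, ?_, hwinv⟩
  · rw [Units.val_mul, hw]
    ext x
    simp [ContinuousLinearMap.mul_apply, ht_def, ContinuousLinearEquiv.toUnit]
  · rw [mul_inv_rev, Units.val_mul]
    rfl

set_option maxHeartbeats 1000000 in
/-- The graph transform. Let `V = V₁ ⊕ V₂` be a finite-dimensional normed real vector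
space and `φ = [[A, B],[C, D]]` an invertible linear map in block form, with `A`, `D`
invertible and `max{‖A⁻¹B‖, ‖D⁻¹C‖, ‖A‖·‖D⁻¹‖} < 1/3`. Then for every
`f ∈ Hom(V₂, V₁)` with `‖f‖ < 1` the operator `D + C f` is invertible, the graph
transform `ψ(f) = (B + A f)(D + C f)⁻¹` satisfies `‖ψ(f)‖ ≤ 2/3`, and `ψ` is Lipschitz
with constant `5/6` on the open unit ball of `Hom(V₂, V₁)`. -/
theorem graph_transform_contraction
    {V₁ V₂ : Type*}
    [NormedAddCommGroup V₁] [NormedSpace ℝ V₁] [FiniteDimensional ℝ V₁]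
    [NormedAddCommGroup V₂] [NormedSpace ℝ V₂] [FiniteDimensional ℝ V₂]
    (A : V₁ ≃L[ℝ] V₁) (B : V₂ →L[ℝ] V₁) (C : V₁ →L[ℝ] V₂) (D : V₂ ≃L[ℝ] V₂)
    (hAB : ‖(A.symm : V₁ →L[ℝ] V₁).comp B‖ < 1 / 3)
    (hDC : ‖(D.symm : V₂ →L[ℝ] V₂).comp C‖ < 1 / 3)
    (hAD : ‖(A : V₁ →L[ℝ] V₁)‖ * ‖(D.symm : V₂ →L[ℝ] V₂)‖ < 1 / 3) :
    (∀ f : V₂ →L[ℝ] V₁, ‖f‖ < 1 →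
      IsUnit ((D : V₂ →L[ℝ] V₂) + C.comp f) ∧
      ‖(B + (A : V₁ →L[ℝ] V₁).comp f).comp
          (Ring.inverse ((D : V₂ →L[ℝ] V₂) + C.comp f))‖ ≤ 2 / 3) ∧
    ∀ f₁ f₂ : V₂ →L[ℝ] V₁, ‖f₁‖ < 1 → ‖f₂‖ < 1 →
      ‖(B + (A : V₁ →L[ℝ] V₁).comp f₁).comp
          (Ring.inverse ((D : V₂ →L[ℝ] V₂) + C.comp f₁)) -
        (B + (A : V₁ →L[ℝ] V₁).comp f₂).comp
          (Ring.inverse ((D : V₂ →L[ℝ] V₂) + C.comp f₂))‖ ≤ (5 / 6) * ‖f₁ - f₂‖ := by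
  haveI : CompleteSpace V₂ := FiniteDimensional.complete ℝ V₂
  -- auxiliary facts
  have hA0 : (0:ℝ) ≤ ‖(A : V₁ →L[ℝ] V₁)‖ := norm_nonneg _
  have hD0 : (0:ℝ) ≤ ‖(D.symm : V₂ →L[ℝ] V₂)‖ := norm_nonneg _
  -- rewriting B + A f = A (A⁻¹ B + f)
  have hBA : ∀ f : V₂ →L[ℝ] V₁, B + (A : V₁ →L[ℝ] V₁).comp f
      = (A : V₁ →L[ℝ] V₁).comp ((A.symm : V₁ →L[ℝ] V₁).comp B + f) := by
    intro f; ext x; simp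
  -- the ψ-bound, for any unit with the right decomposition
  have hψ : ∀ f : V₂ →L[ℝ] V₁, ‖f‖ < 1 → ∀ (e : (V₂ →L[ℝ] V₂)ˣ) (j : V₂ →L[ℝ] V₂),
      (e : V₂ →L[ℝ] V₂) = (D : V₂ →L[ℝ] V₂) + C.comp f →
      (↑e⁻¹ : V₂ →L[ℝ] V₂) = j.comp (D.symm : V₂ →L[ℝ] V₂) → ‖j‖ ≤ 3/2 →
      ‖(B + (A : V₁ →L[ℝ] V₁).comp f).comp (↑e⁻¹ : V₂ →L[ℝ] V₂)‖ ≤ 2 / 3 := by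
    intro f hf e j he hj hjn
    rw [hBA f, hj, ContinuousLinearMap.comp_assoc]
    have hM : ‖(A.symm : V₁ →L[ℝ] V₁).comp B + f‖ ≤ 4/3 := by
      have := norm_add_le ((A.symm : V₁ →L[ℝ] V₁).comp B) f
      linarith
    calc ‖(A : V₁ →L[ℝ] V₁).comp
          (((A.symm : V₁ →L[ℝ] V₁).comp B + f).comp (j.comp (D.symm : V₂ →L[ℝ] V₂)))‖
        ≤ ‖(A : V₁ →L[ℝ] V₁)‖ *
          (‖(A.symm : V₁ →L[ℝ] V₁).comp B + f‖ * (‖j‖ * ‖(D.symm : V₂ →L[ℝ] V₂)‖)) := by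
          refine le_trans (opNorm_comp_le _ _) ?_
          refine mul_le_mul_of_nonneg_left (le_trans (opNorm_comp_le _ _) ?_) hA0
          exact mul_le_mul_of_nonneg_left (opNorm_comp_le _ _) (norm_nonneg _)
      _ ≤ ‖(A : V₁ →L[ℝ] V₁)‖ * ((4/3) * ((3/2) * ‖(D.symm : V₂ →L[ℝ] V₂)‖)) := by
          gcongr
      _ = 2 * (‖(A : V₁ →L[ℝ] V₁)‖ * ‖(D.symm : V₂ →L[ℝ] V₂)‖) := by ring
      _ ≤ 2/3 := by linarith
    -- done
  constructor
  · intro f hf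
    obtain ⟨e, j, he, hj, hjn⟩ := gt_aux C D hDC f hf
    have hinv : Ring.inverse ((D : V₂ →L[ℝ] V₂) + C.comp f) = (↑e⁻¹ : V₂ →L[ℝ] V₂) := by
      rw [← he, Ring.inverse_unit]
    refine ⟨⟨e, he⟩, ?_⟩
    rw [hinv]
    exact hψ f hf e j he hj hjn
  · intro f₁ f₂ h₁ h₂
    obtain ⟨e₁, j₁, he₁, hj₁, hn₁⟩ := gt_aux C D hDC f₁ h₁
    obtain ⟨e₂, j₂, he₂, hj₂, hn₂⟩ := gt_aux C D hDC f₂ h₂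
    have hinv₁ : Ring.inverse ((D : V₂ →L[ℝ] V₂) + C.comp f₁) = (↑e₁⁻¹ : V₂ →L[ℝ] V₂) := by
      rw [← he₁, Ring.inverse_unit]
    have hinv₂ : Ring.inverse ((D : V₂ →L[ℝ] V₂) + C.comp f₂) = (↑e₂⁻¹ : V₂ →L[ℝ] V₂) := by
      rw [← he₂, Ring.inverse_unit]
    rw [hinv₁, hinv₂]
    set Δ : V₂ →L[ℝ] V₁ := f₁ - f₂ with hΔ
    set J₁ : V₂ →L[ℝ] V₂ := (↑e₁⁻¹ : V₂ →L[ℝ] V₂) with hJ₁def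
    set J₂ : V₂ →L[ℝ] V₂ := (↑e₂⁻¹ : V₂ →L[ℝ] V₂) with hJ₂def
    set N₁ : V₂ →L[ℝ] V₁ := B + (A : V₁ →L[ℝ] V₁).comp f₁ with hN₁
    set N₂ : V₂ →L[ℝ] V₁ := B + (A : V₁ →L[ℝ] V₁).comp f₂ with hN₂
    have hsplit : (↑e₁ : V₂ →L[ℝ] V₂) = (↑e₂ : V₂ →L[ℝ] V₂) + C.comp Δ := by
      rw [he₁, he₂, hΔ, ContinuousLinearMap.comp_sub]
      abel
    have hJ : J₂ = J₁ + (J₂ * (C.comp Δ)) * J₁ := by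
      have h2 : (↑e₁ : V₂ →L[ℝ] V₂) * J₁ = 1 := by rw [hJ₁def]; exact e₁.mul_inv
      have h3 : J₂ * (↑e₂ : V₂ →L[ℝ] V₂) = 1 := by rw [hJ₂def]; exact e₂.inv_mul
      calc J₂ = J₂ * ((↑e₁ : V₂ →L[ℝ] V₂) * J₁) := by rw [h2, mul_one]
        _ = J₂ * (↑e₂ : V₂ →L[ℝ] V₂) * J₁ + (J₂ * (C.comp Δ)) * J₁ := by
            rw [hsplit]; noncomm_ring
        _ = J₁ + (J₂ * (C.comp Δ)) * J₁ := by rw [h3, one_mul]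
    have hident : N₁.comp J₁ - N₂.comp J₂
        = ((A : V₁ →L[ℝ] V₁).comp Δ).comp J₁ - N₂.comp ((J₂ * (C.comp Δ)) * J₁) := by
      have hND : N₁ - N₂ = (A : V₁ →L[ℝ] V₁).comp Δ := by
        rw [hN₁, hN₂, hΔ, ContinuousLinearMap.comp_sub]
        abel
      conv_lhs => rw [hJ]
      rw [ContinuousLinearMap.comp_add, ← hND, ContinuousLinearMap.sub_comp]
      abel
    rw [hident]
    -- bound the two terms
    have hT₁ : ‖((A : V₁ →L[ℝ] V₁).comp Δ).comp J₁‖ ≤ (1/2) * ‖Δ‖ := by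
      have hstep : ‖((A : V₁ →L[ℝ] V₁).comp Δ).comp J₁‖
          ≤ (‖(A : V₁ →L[ℝ] V₁)‖ * ‖Δ‖) * (‖j₁‖ * ‖(D.symm : V₂ →L[ℝ] V₂)‖) := by
        rw [hj₁]
        exact le_trans (opNorm_comp_le _ _)
          (mul_le_mul (opNorm_comp_le _ _) (opNorm_comp_le _ _) (norm_nonneg _)
            (mul_nonneg hA0 (norm_nonneg _)))
      have hkey : (‖(A : V₁ →L[ℝ] V₁)‖ * ‖(D.symm : V₂ →L[ℝ] V₂)‖) * ‖Δ‖
          ≤ (1/3) * ‖Δ‖ := mul_le_mul_of_nonneg_right hAD.le (norm_nonneg Δ)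
      calc ‖((A : V₁ →L[ℝ] V₁).comp Δ).comp J₁‖
          ≤ (‖(A : V₁ →L[ℝ] V₁)‖ * ‖Δ‖) * (‖j₁‖ * ‖(D.symm : V₂ →L[ℝ] V₂)‖) := hstep
        _ ≤ (‖(A : V₁ →L[ℝ] V₁)‖ * ‖Δ‖) * ((3/2) * ‖(D.symm : V₂ →L[ℝ] V₂)‖) := by
            gcongr
        _ = (3/2) * ((‖(A : V₁ →L[ℝ] V₁)‖ * ‖(D.symm : V₂ →L[ℝ] V₂)‖) * ‖Δ‖) := by ring
        _ ≤ (1/2) * ‖Δ‖ := by linarith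
    have hG : J₂ * (C.comp Δ) = j₂.comp (((D.symm : V₂ →L[ℝ] V₂).comp C).comp Δ) := by
      ext x
      simp [hj₂, ContinuousLinearMap.mul_apply]
    have hGn : ‖((D.symm : V₂ →L[ℝ] V₂).comp C).comp Δ‖ ≤ (1/3) * ‖Δ‖ := by
      refine le_trans (opNorm_comp_le _ _) ?_
      exact mul_le_mul_of_nonneg_right hDC.le (norm_nonneg _)
    have hM₂ : ‖(A.symm : V₁ →L[ℝ] V₁).comp B + f₂‖ ≤ 4/3 := by
      have := norm_add_le ((A.symm : V₁ →L[ℝ] V₁).comp B) f₂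
      linarith
    have hT₂ : ‖N₂.comp ((J₂ * (C.comp Δ)) * J₁)‖ ≤ (1/3) * ‖Δ‖ := by
      have hrw : N₂.comp ((J₂ * (C.comp Δ)) * J₁)
          = (A : V₁ →L[ℝ] V₁).comp (((A.symm : V₁ →L[ℝ] V₁).comp B + f₂).comp
              ((j₂.comp (((D.symm : V₂ →L[ℝ] V₂).comp C).comp Δ)).comp
                (j₁.comp (D.symm : V₂ →L[ℝ] V₂)))) := by
        ext x
        simp [hN₂, hj₁, hj₂, ContinuousLinearMap.mul_apply]
      rw [hrw]
      have step : ‖(A : V₁ →L[ℝ] V₁).comp (((A.symm : V₁ →L[ℝ] V₁).comp B + f₂).comp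
              ((j₂.comp (((D.symm : V₂ →L[ℝ] V₂).comp C).comp Δ)).comp
                (j₁.comp (D.symm : V₂ →L[ℝ] V₂))))‖
          ≤ ‖(A : V₁ →L[ℝ] V₁)‖ * (‖(A.symm : V₁ →L[ℝ] V₁).comp B + f₂‖ *
              ((‖j₂‖ * ‖((D.symm : V₂ →L[ℝ] V₂).comp C).comp Δ‖) *
                (‖j₁‖ * ‖(D.symm : V₂ →L[ℝ] V₂)‖))) := by
        refine le_trans (opNorm_comp_le _ _) (mul_le_mul_of_nonneg_left ?_ hA0)
        refine le_trans (opNorm_comp_le _ _)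
          (mul_le_mul_of_nonneg_left ?_ (norm_nonneg _))
        exact le_trans (opNorm_comp_le _ _)
          (mul_le_mul (opNorm_comp_le _ _) (opNorm_comp_le _ _) (norm_nonneg _)
            (mul_nonneg (norm_nonneg _) (norm_nonneg _)))
      refine le_trans step ?_
      have h1 : ‖(A.symm : V₁ →L[ℝ] V₁).comp B + f₂‖ *
              ((‖j₂‖ * ‖((D.symm : V₂ →L[ℝ] V₂).comp C).comp Δ‖) *
                (‖j₁‖ * ‖(D.symm : V₂ →L[ℝ] V₂)‖))
          ≤ (4/3) * (((3/2) * ((1/3) * ‖Δ‖)) * ((3/2) * ‖(D.symm : V₂ →L[ℝ] V₂)‖)) := by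
        gcongr
      have hkey : (‖(A : V₁ →L[ℝ] V₁)‖ * ‖(D.symm : V₂ →L[ℝ] V₂)‖) * ‖Δ‖
          ≤ (1/3) * ‖Δ‖ := mul_le_mul_of_nonneg_right hAD.le (norm_nonneg Δ)
      have h2 : ‖(A : V₁ →L[ℝ] V₁)‖ * ((4/3) * (((3/2) * ((1/3) * ‖Δ‖)) *
              ((3/2) * ‖(D.symm : V₂ →L[ℝ] V₂)‖))) ≤ (1/3) * ‖Δ‖ := by
        have heq : ‖(A : V₁ →L[ℝ] V₁)‖ * ((4/3) * (((3/2) * ((1/3) * ‖Δ‖)) *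
              ((3/2) * ‖(D.symm : V₂ →L[ℝ] V₂)‖)))
            = (‖(A : V₁ →L[ℝ] V₁)‖ * ‖(D.symm : V₂ →L[ℝ] V₂)‖) * ‖Δ‖ := by ring
        rw [heq]; exact hkey
      calc ‖(A : V₁ →L[ℝ] V₁)‖ * (‖(A.symm : V₁ →L[ℝ] V₁).comp B + f₂‖ *
              ((‖j₂‖ * ‖((D.symm : V₂ →L[ℝ] V₂).comp C).comp Δ‖) *
                (‖j₁‖ * ‖(D.symm : V₂ →L[ℝ] V₂)‖)))
          ≤ ‖(A : V₁ →L[ℝ] V₁)‖ * ((4/3) * (((3/2) * ((1/3) * ‖Δ‖)) *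
              ((3/2) * ‖(D.symm : V₂ →L[ℝ] V₂)‖))) :=
            mul_le_mul_of_nonneg_left h1 hA0
        _ ≤ (1/3) * ‖Δ‖ := h2
    calc ‖((A : V₁ →L[ℝ] V₁).comp Δ).comp J₁ - N₂.comp ((J₂ * (C.comp Δ)) * J₁)‖
        ≤ ‖((A : V₁ →L[ℝ] V₁).comp Δ).comp J₁‖ + ‖N₂.comp ((J₂ * (C.comp Δ)) * J₁)‖ :=
          norm_sub_le _ _
      _ ≤ (1/2) * ‖Δ‖ + (1/3) * ‖Δ‖ := add_le_add hT₁ hT₂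
      _ = (5/6) * ‖Δ‖ := by ring
end

section
/- Let σ, κ : [0, ∞) → ℝ be such that there exist constants B ≥ 1, b > 0, R > 0, T₁ ≥ 0 with the following contraction-concatenation property for a function q(v, t) measuring contraction of a flow: if a trajectory spends times [0, s₁] and [s₂, t] in a 'thin' region where q multiplies by at most B e^{−b·(time)}, and time [s₁, s₂] in a compact region where either q multiplies by at most 1/(2B²) (if s₂ − s₁ ≥ T₁) or by at most R e^{s₂ − s₁} (if s₂ − s₁ < T₁), then for every t ≥ T where T satisfies B² R e^{T₁(1+b) − bT} ≤ 1/2 and B e^{−bT} ≤ 1/2, the total multiplier over [0, t] is at most 1/2. Consequently, iterating gives a uniform exponential bound: the multiplier over [0, t] is at most A e^{−a t} with a = log(2)/T for a suitable constant A. -/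
/-- Quantitative gluing lemma for contraction multipliers. Let `B ≥ 1`, `b > 0`, `R > 0`,
`T₁ ≥ 0` and choose `T > 0` with `B² R e^{T₁(1+b) − bT} ≤ 1/2` and `B e^{−bT} ≤ 1/2`.
Then: (a) for every `t ≥ T` and `0 ≤ s₁ ≤ s₂ ≤ t`, and any `m ≥ 0` with
`m ≤ 1/(2B²)` if `s₂ − s₁ ≥ T₁` and `m ≤ R e^{s₂−s₁}` if `s₂ − s₁ < T₁`, the total
multiplier `(B e^{−b s₁}) · m · (B e^{−b(t−s₂)})` is at most `1/2`; and (b) consequently,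
iterating: any nonnegative submultiplicative multiplier function `q` with `q t ≤ 1/2` for
all `t ≥ T`, bounded on `[0, T]`, satisfies a uniform exponential bound
`q t ≤ A e^{−at}` with `a = log 2 / T` for a suitable constant `A`. -/
theorem contraction_gluing
    (B b R T₁ T : ℝ) (hB : 1 ≤ B) (hb : 0 < b) (hR : 0 < R) (hT₁ : 0 ≤ T₁) (hT : 0 < T)
    (hT2 : B ^ 2 * R * Real.exp (T₁ * (1 + b) - b * T) ≤ 1 / 2)
    (hT3 : B * Real.exp (-b * T) ≤ 1 / 2) :
    (∀ t s₁ s₂ m : ℝ, T ≤ t → 0 ≤ s₁ → s₁ ≤ s₂ → s₂ ≤ t → 0 ≤ m →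
      (T₁ ≤ s₂ - s₁ → m ≤ 1 / (2 * B ^ 2)) →
      (s₂ - s₁ < T₁ → m ≤ R * Real.exp (s₂ - s₁)) →
      (B * Real.exp (-b * s₁)) * m * (B * Real.exp (-b * (t - s₂))) ≤ 1 / 2) ∧
    ∀ q : ℝ → ℝ,
      (∀ t, 0 ≤ q t) →
      (∀ s t : ℝ, 0 ≤ s → 0 ≤ t → q (s + t) ≤ q s * q t) →
      (∀ t, T ≤ t → q t ≤ 1 / 2) →
      (∃ A₀ : ℝ, ∀ t ∈ Set.Icc (0 : ℝ) T, q t ≤ A₀) →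
      ∃ A : ℝ, 0 < A ∧ ∀ t : ℝ, 0 ≤ t →
        q t ≤ A * Real.exp (-(Real.log 2 / T) * t) := by
  have hB0 : (0:ℝ) < B := lt_of_lt_of_le one_pos hB
  constructor
  · intro t s₁ s₂ m ht hs₁ hs₁₂ hs₂ hm h1 h2
    rcases le_or_gt T₁ (s₂ - s₁) with hc | hc
    · have hm' := h1 hc
      have e1 : Real.exp (-b * s₁) ≤ 1 := Real.exp_le_one_iff.mpr (by nlinarith)
      have e2 : Real.exp (-b * (t - s₂)) ≤ 1 := Real.exp_le_one_iff.mpr (by nlinarith)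
      have hpos1 : 0 < Real.exp (-b * s₁) := Real.exp_pos _
      have hpos2 : 0 < Real.exp (-b * (t - s₂)) := Real.exp_pos _
      calc (B * Real.exp (-b * s₁)) * m * (B * Real.exp (-b * (t - s₂)))
          ≤ (B * 1) * (1 / (2 * B ^ 2)) * (B * 1) := by
            apply mul_le_mul
            · apply mul_le_mul
              · exact mul_le_mul_of_nonneg_left e1 hB0.le
              · exact hm'
              · exact hm
              · positivity
            · exact mul_le_mul_of_nonneg_left e2 hB0.le
            · positivity
            · positivity
        _ = 1 / 2 := by field_simp
    · have hm' := h2 hc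
      have key : (B * Real.exp (-b * s₁)) * m * (B * Real.exp (-b * (t - s₂)))
          ≤ B ^ 2 * R * Real.exp ((s₂ - s₁) + (-b * s₁) + (-b * (t - s₂))) := by
        rw [Real.exp_add, Real.exp_add]
        have : (B * Real.exp (-b * s₁)) * m * (B * Real.exp (-b * (t - s₂)))
            ≤ (B * Real.exp (-b * s₁)) * (R * Real.exp (s₂ - s₁)) * (B * Real.exp (-b * (t - s₂))) := by
          apply mul_le_mul_of_nonneg_right _ (by positivity)
          exact mul_le_mul_of_nonneg_left hm' (by positivity)
        calc (B * Real.exp (-b * s₁)) * m * (B * Real.exp (-b * (t - s₂)))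
            ≤ (B * Real.exp (-b * s₁)) * (R * Real.exp (s₂ - s₁)) * (B * Real.exp (-b * (t - s₂))) := this
          _ = B ^ 2 * R * (Real.exp (s₂ - s₁) * Real.exp (-b * s₁) * Real.exp (-b * (t - s₂))) := by ring
      have expo : (s₂ - s₁) + (-b * s₁) + (-b * (t - s₂)) ≤ T₁ * (1 + b) - b * T := by nlinarith
      calc (B * Real.exp (-b * s₁)) * m * (B * Real.exp (-b * (t - s₂)))
          ≤ B ^ 2 * R * Real.exp ((s₂ - s₁) + (-b * s₁) + (-b * (t - s₂))) := key
        _ ≤ B ^ 2 * R * Real.exp (T₁ * (1 + b) - b * T) := by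
            apply mul_le_mul_of_nonneg_left (Real.exp_le_exp.mpr expo) (by positivity)
        _ ≤ 1 / 2 := hT2
  · intro q hq0 hqmul hqT ⟨A₀, hA₀⟩
    set A' := max A₀ 1 with hA'
    have hA'1 : (1:ℝ) ≤ A' := le_max_right _ _
    have hA'0 : (0:ℝ) < A' := lt_of_lt_of_le one_pos hA'1
    have step : ∀ n : ℕ, ∀ t : ℝ, (n : ℝ) * T ≤ t → q t ≤ A' * (1/2)^n := by
      intro n
      induction n with
      | zero =>
        intro t ht
        simp only [Nat.cast_zero, zero_mul] at ht
        rcases le_or_gt t T with h | h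
        · simp only [pow_zero, mul_one]
          exact le_trans (hA₀ t ⟨ht, h⟩) (le_max_left A₀ 1)
        · have := hqT t h.le
          simp only [pow_zero, mul_one]
          linarith
      | succ n ih =>
        intro t ht
        have hnT : (n:ℝ) * T ≤ t - T := by push_cast at ht ⊢; nlinarith
        have h0 : (0:ℝ) ≤ t - T := le_trans (by positivity) hnT
        have := hqmul T (t - T) hT.le h0
        rw [add_sub_cancel] at this
        have h1 : q T ≤ 1/2 := hqT T le_rfl
        have h2 : q (t - T) ≤ A' * (1/2)^n := ih (t - T) hnT
        calc q t ≤ q T * q (t - T) := this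
          _ ≤ (1/2) * (A' * (1/2)^n) := by
              apply mul_le_mul h1 h2 (hq0 _) (by norm_num)
          _ = A' * (1/2)^(n+1) := by ring
    refine ⟨2 * A', by positivity, fun t ht => ?_⟩
    set n : ℕ := ⌊t / T⌋₊ with hn
    have hnt : (n:ℝ) * T ≤ t := by
      have : (n:ℝ) ≤ t / T := Nat.floor_le (by positivity)
      calc (n:ℝ) * T ≤ (t / T) * T := by nlinarith
        _ = t := by field_simp
    have hub : t / T < (n:ℝ) + 1 := Nat.lt_floor_add_one _
    have hexp : (1/2 : ℝ)^n = Real.exp (-(n:ℝ) * Real.log 2) := by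
      rw [show -(n:ℝ) * Real.log 2 = (n:ℝ) * (-Real.log 2) by ring, Real.exp_nat_mul,
        Real.exp_neg, Real.exp_log two_pos]
      norm_num
    have hlog2 : 0 < Real.log 2 := Real.log_pos (by norm_num)
    have hexple : Real.exp (-(n:ℝ) * Real.log 2) ≤ 2 * Real.exp (-(Real.log 2 / T) * t) := by
      have heq : 2 * Real.exp (-(Real.log 2 / T) * t)
          = Real.exp (Real.log 2 + -(Real.log 2 / T) * t) := by
        rw [Real.exp_add, Real.exp_log two_pos]
      rw [heq]
      apply Real.exp_le_exp.mpr
      have htT : t / T ≤ (n:ℝ) + 1 := hub.le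
      rw [div_le_iff₀ hT] at htT
      have h5 : Real.log 2 / T * t ≤ Real.log 2 / T * (((n:ℝ)+1)*T) :=
        mul_le_mul_of_nonneg_left htT (by positivity)
      have h6 : Real.log 2 / T * (((n:ℝ)+1)*T) = ((n:ℝ)+1)*Real.log 2 := by
        field_simp
      linarith [h5, h6.le]
    calc q t ≤ A' * (1/2)^n := step n t hnt
      _ = A' * Real.exp (-(n:ℝ) * Real.log 2) := by rw [hexp]
      _ ≤ A' * (2 * Real.exp (-(Real.log 2 / T) * t)) :=
          mul_le_mul_of_nonneg_left hexple hA'0.le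
      _ = 2 * A' * Real.exp (-(Real.log 2 / T) * t) := by ring
end
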